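/- arXiv:2507.10517 — 8 statements merged into one kernel-verified Lean document; each statement's English description precedes it below -/
import Mathlib

section
/- Upwards propagation of superstatistics (energy-space form of the main theorem). Let Ω_B : (0,∞) → [0,∞) be measurable with Z_B(β) := ∫₀^∞ Ω_B(E) exp(−βE) dE finite and strictly positive for every β > 0. Let ν be a Borel measure on (0,∞) such that ρ(E) := ∫₀^∞ exp(−βE) dν(β) is finite for every E > 0, and let f_A : (0,∞) → [0,∞) be measurable with ∫₀^∞ f_A(β) exp(−βε) dβ finite for every ε > 0. If for every ε > 0 one has ∫₀^∞ Ω_B(E′) ρ(ε + E′) dE′ = ∫₀^∞ f_A(β) exp(−βε) dβ, then the measure ν is absolutely continuous with respect to Lebesgue measure with density f_A(β)/Z_B(β); equivalently, ρ(E) = ∫₀^∞ (f_A(β)/Z_B(β)) · exp(−βE) dβ for every E > 0. -/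
open MeasureTheory Set ENNReal

lemma integrable_cm (m : Measure (Icc (0:ℝ) 1)) [IsFiniteMeasure m]
    (g : C(Icc (0:ℝ) 1, ℝ)) : Integrable g m := by
  exact (BoundedContinuousFunction.mkOfCompact g).integrable m

lemma continuous_integral_cm (m : Measure (Icc (0:ℝ) 1)) [IsFiniteMeasure m] :
    Continuous fun g : C(Icc (0:ℝ) 1, ℝ) => ∫ x, g x ∂m := by
  refine (LipschitzWith.of_dist_le_mul (K := (m univ).toReal.toNNReal) ?_).continuous
  intro g h
  rw [Real.dist_eq, ← integral_sub (integrable_cm m g) (integrable_cm m h)]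
  have hb : ∀ᵐ x ∂m, ‖g x - h x‖ ≤ dist g h :=
    Filter.Eventually.of_forall fun x => by
      rw [← dist_eq_norm]; exact ContinuousMap.dist_apply_le_dist x
  calc ‖∫ x, (g x - h x) ∂m‖ ≤ dist g h * (m univ).toReal :=
        norm_integral_le_of_norm_le_const hb
    _ = ((m univ).toReal.toNNReal : ℝ) * dist g h := by
        rw [Real.coe_toNNReal _ ENNReal.toReal_nonneg, mul_comm]

lemma ext_of_moments (m₁ m₂ : Measure (Icc (0:ℝ) 1)) [IsFiniteMeasure m₁] [IsFiniteMeasure m₂]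
    (h : ∀ n : ℕ, ∫ x, ((x : ℝ) ^ n) ∂m₁ = ∫ x, ((x : ℝ) ^ n) ∂m₂) : m₁ = m₂ := by
  have key : ∀ g : C(Icc (0:ℝ) 1, ℝ), ∫ x, g x ∂m₁ = ∫ x, g x ∂m₂ := by
    have hSclosed : IsClosed {g : C(Icc (0:ℝ) 1, ℝ) | ∫ x, g x ∂m₁ = ∫ x, g x ∂m₂} :=
      isClosed_eq (continuous_integral_cm m₁) (continuous_integral_cm m₂)
    have hpoly : ∀ p : Polynomial ℝ,
        ∫ x, Polynomial.eval (x : ℝ) p ∂m₁ = ∫ x, Polynomial.eval (x : ℝ) p ∂m₂ := by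
      intro p
      induction p using Polynomial.induction_on' with
      | add p q hp hq =>
          have i1 : ∀ (m : Measure (Icc (0:ℝ) 1)) [IsFiniteMeasure m] (r : Polynomial ℝ),
              Integrable (fun x : Icc (0:ℝ) 1 => Polynomial.eval (x : ℝ) r) m := by
            intro m _ r
            exact integrable_cm m (r.toContinuousMapOn (Icc (0:ℝ) 1))
          simp only [Polynomial.eval_add]
          rw [integral_add (i1 m₁ p) (i1 m₁ q), integral_add (i1 m₂ p) (i1 m₂ q), hp, hq]
      | monomial n a =>
          simp only [Polynomial.eval_monomial]
          rw [integral_const_mul, integral_const_mul, h n]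
    have hsub : (polynomialFunctions (Icc (0:ℝ) 1) : Set C(Icc (0:ℝ) 1, ℝ)) ⊆
        {g | ∫ x, g x ∂m₁ = ∫ x, g x ∂m₂} := by
      rw [polynomialFunctions_coe]
      rintro _ ⟨p, rfl⟩
      simpa using hpoly p
    intro g
    have hg : g ∈ closure (polynomialFunctions (Icc (0:ℝ) 1) : Set C(Icc (0:ℝ) 1, ℝ)) := by
      rw [← Subalgebra.topologicalClosure_coe, polynomialFunctions_closure_eq_top]
      trivial
    exact hSclosed.closure_subset_iff.mpr hsub hg
  refine ext_of_forall_lintegral_eq_of_IsFiniteMeasure fun f => ?_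
  have h1 : ∫⁻ x, (f x : ℝ≥0∞) ∂m₁ ≠ ⊤ := (f.lintegral_lt_top_of_nnreal m₁).ne
  have h2 : ∫⁻ x, (f x : ℝ≥0∞) ∂m₂ ≠ ⊤ := (f.lintegral_lt_top_of_nnreal m₂).ne
  rw [← ENNReal.toReal_eq_toReal_iff' h1 h2,
    BoundedContinuousFunction.toReal_lintegral_coe_eq_integral,
    BoundedContinuousFunction.toReal_lintegral_coe_eq_integral]
  exact key (ContinuousMap.mk _ (NNReal.continuous_coe.comp f.continuous))



lemma laplace_ext (μ₁ μ₂ : Measure ℝ) (h₁ : μ₁ (Iic 0) = 0) (h₂ : μ₂ (Iic 0) = 0)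
    (hfin₁ : ∫⁻ β, ENNReal.ofReal (Real.exp (-β)) ∂μ₁ ≠ ⊤)
    (hfin₂ : ∫⁻ β, ENNReal.ofReal (Real.exp (-β)) ∂μ₂ ≠ ⊤)
    (hL : ∀ ε > (0:ℝ), ∫⁻ β, ENNReal.ofReal (Real.exp (-β * ε)) ∂μ₁
        = ∫⁻ β, ENNReal.ofReal (Real.exp (-β * ε)) ∂μ₂) : μ₁ = μ₂ := by
  set w : ℝ → ℝ≥0∞ := fun β => ENNReal.ofReal (Real.exp (-β)) with hw
  have hwmeas : Measurable w :=
    (measurable_neg.comp measurable_id).exp.ennreal_ofReal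
  set κ₁ := μ₁.withDensity w with hκ₁
  set κ₂ := μ₂.withDensity w with hκ₂
  -- finiteness
  have hκfin : ∀ (μ : Measure ℝ), (∫⁻ β, w β ∂μ ≠ ⊤) → IsFiniteMeasure (μ.withDensity w) := by
    intro μ hfin
    constructor
    rw [withDensity_apply _ MeasurableSet.univ, Measure.restrict_univ]
    exact hfin.lt_top
  haveI : IsFiniteMeasure κ₁ := hκfin μ₁ hfin₁
  haveI : IsFiniteMeasure κ₂ := hκfin μ₂ hfin₂
  -- concentration on Ioi 0
  have haeκ : ∀ (μ : Measure ℝ), μ (Iic 0) = 0 → ∀ᵐ β ∂(μ.withDensity w), β ∈ Ioi (0:ℝ) := by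
    intro μ hμ
    rw [ae_iff]
    have : {β : ℝ | ¬ β ∈ Ioi (0:ℝ)} = Iic 0 := by ext x; simp [not_lt]
    rw [this, withDensity_apply _ measurableSet_Iic, Measure.restrict_eq_zero.mpr hμ,
      lintegral_zero_measure]
  -- the map to [0,1]
  set Φ : ℝ → Icc (0:ℝ) 1 := fun β => projIcc 0 1 zero_le_one (Real.exp (-β)) with hΦ
  have hΦmeas : Measurable Φ :=
    (continuous_projIcc.comp (Real.continuous_exp.comp continuous_neg)).measurable
  set ψ : Icc (0:ℝ) 1 → ℝ := fun x => -Real.log (x : ℝ) with hψ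
  have hψmeas : Measurable ψ := (Real.measurable_log.comp measurable_subtype_coe).neg
  -- moments of the pushforwards
  have hmom : ∀ (μ : Measure ℝ), μ (Iic 0) = 0 → ∀ n : ℕ,
      ∫⁻ x, ENNReal.ofReal ((x : ℝ) ^ n) ∂((μ.withDensity w).map Φ)
        = ∫⁻ β, ENNReal.ofReal (Real.exp (-β * (n + 1))) ∂μ := by
    intro μ hμ n
    rw [lintegral_map (by fun_prop) hΦmeas]
    have hcongr : ∀ᵐ β ∂(μ.withDensity w),
        ENNReal.ofReal ((Φ β : ℝ) ^ n) = ENNReal.ofReal (Real.exp (-β * n)) := by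
      filter_upwards [haeκ μ hμ] with β hβ
      have hmem : Real.exp (-β) ∈ Icc (0:ℝ) 1 :=
        ⟨(Real.exp_pos _).le, Real.exp_le_one_iff.mpr (by linarith [hβ.out])⟩
      have : (Φ β : ℝ) = Real.exp (-β) :=
        congrArg Subtype.val (projIcc_of_mem zero_le_one hmem)
      rw [this, ← Real.exp_nat_mul]
      ring_nf
    rw [lintegral_congr_ae hcongr, lintegral_withDensity_eq_lintegral_mul _ hwmeas (by fun_prop)]
    congr 1
    ext β
    simp only [Pi.mul_apply, hw]
    rw [← ENNReal.ofReal_mul (Real.exp_pos _).le, ← Real.exp_add]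
    ring_nf
  -- equality of pushforwards
  have hmapeq : κ₁.map Φ = κ₂.map Φ := by
    apply ext_of_moments
    intro n
    have hlint : ∫⁻ x, ENNReal.ofReal ((x : ℝ) ^ n) ∂(κ₁.map Φ)
        = ∫⁻ x, ENNReal.ofReal ((x : ℝ) ^ n) ∂(κ₂.map Φ) := by
      rw [hmom μ₁ h₁ n, hmom μ₂ h₂ n]
      exact hL (n + 1) (by positivity)
    have hnn : ∀ (m : Measure (Icc (0:ℝ) 1)),
        ∫ x, ((x : ℝ) ^ n) ∂m = (∫⁻ x, ENNReal.ofReal ((x : ℝ) ^ n) ∂m).toReal := by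
      intro m
      rw [integral_eq_lintegral_of_nonneg_ae
        (Filter.Eventually.of_forall fun x => pow_nonneg x.2.1 n)
        ((continuous_subtype_val.pow n).aestronglyMeasurable)]
    rw [hnn, hnn, hlint]
  -- recover κᵢ from pushforward
  have hrec : ∀ (μ : Measure ℝ), μ (Iic 0) = 0 →
      Measure.map ψ (Measure.map Φ (μ.withDensity w)) = μ.withDensity w := by
    intro μ hμ
    rw [Measure.map_map hψmeas hΦmeas]
    have : ψ ∘ Φ =ᵐ[μ.withDensity w] id := by
      filter_upwards [haeκ μ hμ] with β hβ
      have hmem : Real.exp (-β) ∈ Icc (0:ℝ) 1 :=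
        ⟨(Real.exp_pos _).le, Real.exp_le_one_iff.mpr (by linarith [hβ.out])⟩
      have hc : (Φ β : ℝ) = Real.exp (-β) :=
        congrArg Subtype.val (projIcc_of_mem zero_le_one hmem)
      simp only [Function.comp_apply, hψ, id_eq, hc, Real.log_exp, neg_neg]
    rw [Measure.map_congr this, Measure.map_id]
  have hκeq : μ₁.withDensity w = μ₂.withDensity w := by
    rw [← hrec μ₁ h₁, ← hrec μ₂ h₂]
    exact congrArg (Measure.map ψ) hmapeq
  -- divide out the density
  have hinv : ∀ (μ : Measure ℝ),
      (μ.withDensity w).withDensity (fun β => (w β)⁻¹) = μ := by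
    intro μ
    refine withDensity_inv_same hwmeas ?_ ?_
    · exact Filter.Eventually.of_forall fun β => by
        simp [hw, ENNReal.ofReal_eq_zero, not_le, Real.exp_pos]
    · exact Filter.Eventually.of_forall fun β => ENNReal.ofReal_ne_top
  rw [← hinv μ₁, ← hinv μ₂, hκeq]




/-- **Upwards propagation of superstatistics (energy-space form).** Let `Ω_B` be a
density of states with partition function `Z_B(β)` finite and positive for `β > 0`, and
let `ν` be a Borel measure on `(0,∞)` (a measure on `ℝ` vanishing on `(-∞,0]`) whose
Laplace transform `ρ(E) = ∫ exp(-βE) dν(β)` is finite for all `E > 0`. If the marginal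
`ε ↦ ∫₀^∞ Ω_B(E') ρ(ε+E') dE'` equals the Laplace transform of a weight `f_A` (finite
for all `ε > 0`), then `ν` is absolutely continuous with respect to Lebesgue measure
with density `f_A(β)/Z_B(β)`; equivalently `ρ(E) = ∫₀^∞ (f_A(β)/Z_B(β)) exp(-βE) dβ`. -/
theorem upwards_propagation_of_superstatistics
    (ΩB : ℝ → ℝ) (hΩB : Measurable ΩB) (hΩB0 : ∀ E, 0 ≤ ΩB E)
    (ZB : ℝ → ℝ≥0∞)
    (hZB : ∀ β, ZB β = ∫⁻ E in Ioi (0:ℝ), ENNReal.ofReal (ΩB E * Real.exp (-β * E)))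
    (hZBpos : ∀ β > (0:ℝ), 0 < ZB β) (hZBfin : ∀ β > (0:ℝ), ZB β < ⊤)
    (ν : Measure ℝ) (hν : ν (Iic 0) = 0)
    (ρ : ℝ → ℝ≥0∞)
    (hρ : ∀ E, ρ E = ∫⁻ β, ENNReal.ofReal (Real.exp (-β * E)) ∂ν)
    (hρfin : ∀ E > (0:ℝ), ρ E < ⊤)
    (fA : ℝ → ℝ) (hfA : Measurable fA) (hfA0 : ∀ β, 0 ≤ fA β)
    (hfAfin : ∀ ε > (0:ℝ),
      ∫⁻ β in Ioi (0:ℝ), ENNReal.ofReal (fA β * Real.exp (-β * ε)) < ⊤)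
    (hmarg : ∀ ε > (0:ℝ),
      ∫⁻ E' in Ioi (0:ℝ), ENNReal.ofReal (ΩB E') * ρ (ε + E')
        = ∫⁻ β in Ioi (0:ℝ), ENNReal.ofReal (fA β * Real.exp (-β * ε))) :
    ν = (volume.restrict (Ioi (0:ℝ))).withDensity
        (fun β => ENNReal.ofReal (fA β) / ZB β)
    ∧ ∀ E > (0:ℝ), ρ E
        = ∫⁻ β in Ioi (0:ℝ),
            (ENNReal.ofReal (fA β) / ZB β) * ENNReal.ofReal (Real.exp (-β * E)) := by
  -- ν is a.e. supported on Ioi 0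
  have haeν : ∀ᵐ β ∂ν, β ∈ Ioi (0:ℝ) := by
    rw [ae_iff]
    have : {β : ℝ | ¬ β ∈ Ioi (0:ℝ)} = Iic 0 := by ext x; simp [not_lt]
    rw [this, hν]
  -- measurability of ZB
  have hZBmeas : Measurable ZB := by
    have : Measurable fun β => ∫⁻ E in Ioi (0:ℝ), ENNReal.ofReal (ΩB E * Real.exp (-β * E)) := by
      apply Measurable.lintegral_prod_right (f := fun β E => ENNReal.ofReal (ΩB E * Real.exp (-β * E)))
      fun_prop
    exact (funext hZB : ZB = _) ▸ this
  -- ν is sigma-finite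
  have hρ1 : ∫⁻ β, ENNReal.ofReal (Real.exp (-β)) ∂ν ≠ ⊤ := by
    have := (hρfin 1 one_pos).ne
    rw [hρ 1] at this
    simpa using this
  haveI hsf : SigmaFinite ν := by
    constructor
    refine ⟨⟨fun n => Iic ((n:ℝ) + 1), fun _ => trivial, ?_, ?_⟩⟩
    · intro n
      have hsub : Iic ((n:ℝ) + 1) = Iic 0 ∪ Ioc 0 ((n:ℝ)+1) := by
        rw [Iic_union_Ioc_eq_Iic (by positivity)]
      have hb : ENNReal.ofReal (Real.exp (-((n:ℝ)+1))) * ν (Ioc 0 ((n:ℝ)+1))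
          ≤ ∫⁻ β, ENNReal.ofReal (Real.exp (-β)) ∂ν := by
        rw [← setLIntegral_const]
        refine le_trans (setLIntegral_mono (by fun_prop) ?_) (setLIntegral_le_lintegral _ _)
        intro β hβ
        exact ENNReal.ofReal_le_ofReal (Real.exp_le_exp.mpr (by linarith [hβ.2]))
      have hfin : ν (Ioc 0 ((n:ℝ)+1)) < ⊤ := by
        by_contra hcon
        rw [not_lt, top_le_iff] at hcon
        rw [hcon, ENNReal.mul_top (by simp [Real.exp_pos])] at hb
        exact hρ1 (top_le_iff.mp hb)
      calc ν (Iic ((n:ℝ)+1)) ≤ ν (Iic 0) + ν (Ioc 0 ((n:ℝ)+1)) := by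
            rw [hsub]; exact measure_union_le _ _
        _ < ⊤ := by rw [hν, zero_add]; exact hfin
    · refine eq_univ_iff_forall.mpr fun x => mem_iUnion.mpr ?_
      obtain ⟨n, hn⟩ := exists_nat_ge x
      exact ⟨n, by simpa using le_trans hn (by linarith)⟩
  -- Claim A : Laplace transform identity
  have claimA : ∀ ε > (0:ℝ),
      ∫⁻ E' in Ioi (0:ℝ), ENNReal.ofReal (ΩB E') * ρ (ε + E')
        = ∫⁻ β, ZB β * ENNReal.ofReal (Real.exp (-β * ε)) ∂ν := by
    intro ε hε
    have step1 : ∀ E' : ℝ, ENNReal.ofReal (ΩB E') * ρ (ε + E')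
        = ∫⁻ β, ENNReal.ofReal (ΩB E') * ENNReal.ofReal (Real.exp (-β * (ε + E'))) ∂ν := by
      intro E'
      rw [hρ (ε + E'), lintegral_const_mul _ (by fun_prop)]
    simp_rw [step1]
    rw [lintegral_lintegral_swap (by fun_prop)]
    refine lintegral_congr fun β => ?_
    have step2 : ∀ E' : ℝ, ENNReal.ofReal (ΩB E') * ENNReal.ofReal (Real.exp (-β * (ε + E')))
        = ENNReal.ofReal (Real.exp (-β * ε)) * ENNReal.ofReal (ΩB E' * Real.exp (-β * E')) := by
      intro E'
      rw [ENNReal.ofReal_mul (hΩB0 E'), show -β * (ε + E') = (-β * ε) + (-β * E') by ring,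
        Real.exp_add, ENNReal.ofReal_mul (Real.exp_pos _).le]
      ring
    simp_rw [step2]
    rw [lintegral_const_mul _ (by fun_prop), ← hZB β]
    ring
  -- the two measures
  set μ₁ := ν.withDensity ZB with hμ₁
  set μ₂ := (volume.restrict (Ioi (0:ℝ))).withDensity (fun β => ENNReal.ofReal (fA β)) with hμ₂
  have hL₁ : ∀ ε : ℝ, ∫⁻ β, ENNReal.ofReal (Real.exp (-β * ε)) ∂μ₁
      = ∫⁻ β, ZB β * ENNReal.ofReal (Real.exp (-β * ε)) ∂ν := by
    intro ε
    rw [hμ₁, lintegral_withDensity_eq_lintegral_mul _ hZBmeas (by fun_prop)]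
    rfl
  have hL₂ : ∀ ε : ℝ, ∫⁻ β, ENNReal.ofReal (Real.exp (-β * ε)) ∂μ₂
      = ∫⁻ β in Ioi (0:ℝ), ENNReal.ofReal (fA β * Real.exp (-β * ε)) := by
    intro ε
    rw [hμ₂, lintegral_withDensity_eq_lintegral_mul _ (by fun_prop) (by fun_prop)]
    refine lintegral_congr fun β => ?_
    simp only [Pi.mul_apply]
    rw [← ENNReal.ofReal_mul (hfA0 β)]
  have hLap : ∀ ε > (0:ℝ), ∫⁻ β, ENNReal.ofReal (Real.exp (-β * ε)) ∂μ₁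
      = ∫⁻ β, ENNReal.ofReal (Real.exp (-β * ε)) ∂μ₂ := by
    intro ε hε
    rw [hL₁, hL₂, ← claimA ε hε, hmarg ε hε]
  -- apply uniqueness
  have hμ₁Iic : μ₁ (Iic 0) = 0 := by
    rw [hμ₁, withDensity_apply _ measurableSet_Iic, Measure.restrict_eq_zero.mpr hν,
      lintegral_zero_measure]
  have hμ₂Iic : μ₂ (Iic 0) = 0 := by
    rw [hμ₂, withDensity_apply _ measurableSet_Iic, Measure.restrict_restrict measurableSet_Iic]
    have : Iic (0:ℝ) ∩ Ioi 0 = ∅ := by ext x; simp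
    rw [this, Measure.restrict_empty, lintegral_zero_measure]
  have hfin₂ : ∫⁻ β, ENNReal.ofReal (Real.exp (-β)) ∂μ₂ ≠ ⊤ := by
    have := hL₂ 1
    simp only [mul_one] at this
    rw [this]
    simpa using (hfAfin 1 one_pos).ne
  have hfin₁ : ∫⁻ β, ENNReal.ofReal (Real.exp (-β)) ∂μ₁ ≠ ⊤ := by
    have := hLap 1 one_pos
    simp only [mul_one] at this
    rw [this]
    exact hfin₂
  have hμeq : μ₁ = μ₂ := laplace_ext μ₁ μ₂ hμ₁Iic hμ₂Iic hfin₁ hfin₂ hLap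
  -- recover ν
  have hZBne0 : ∀ᵐ β ∂ν, ZB β ≠ 0 := by
    filter_upwards [haeν] with β hβ using (hZBpos β hβ).ne'
  have hZBnetop : ∀ᵐ β ∂ν, ZB β ≠ ⊤ := by
    filter_upwards [haeν] with β hβ using (hZBfin β hβ).ne
  have hνeq : ν = (volume.restrict (Ioi (0:ℝ))).withDensity
      (fun β => ENNReal.ofReal (fA β) / ZB β) := by
    have h1 : ν = μ₁.withDensity (fun β => (ZB β)⁻¹) :=
      (withDensity_inv_same hZBmeas hZBne0 hZBnetop).symm
    rw [h1, hμeq, hμ₂, ← withDensity_mul _ (f := fun β => ENNReal.ofReal (fA β)) (g := fun β => (ZB β)⁻¹) (by fun_prop) (Measurable.inv hZBmeas)]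
    congr 1
  refine ⟨hνeq, fun E hE => ?_⟩
  rw [hρ E, hνeq, lintegral_withDensity_eq_lintegral_mul _ (by fun_prop) (by fun_prop)]
  rfl
end

section
/- Impossibility of local thermal equilibrium in non-canonical steady states. Let Ω_B : (0,∞) → [0,∞) be measurable with Z_B(β) := ∫₀^∞ Ω_B(E) exp(−βE) dE finite and strictly positive for all β > 0. Let ν be a Borel measure on (0,∞) with ρ(E) := ∫₀^∞ exp(−βE) dν(β) finite for all E > 0. If there exist constants C > 0 and β₀ > 0 such that for every ε > 0, ∫₀^∞ Ω_B(E′) ρ(ε + E′) dE′ = C · exp(−β₀ ε), then ν = (C/Z_B(β₀)) · δ_{β₀} (a point mass at β₀), and hence ρ(E) = (C/Z_B(β₀)) · exp(−β₀ E) for all E > 0. In particular, if a subsystem of a superstatistical steady state is canonical at inverse temperature β₀, the whole steady state is canonical at β₀; a genuinely non-canonical superstatistical steady state admits no subsystem in local thermal equilibrium. -/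
open MeasureTheory Set ENNReal Filter Topology

/-- If a set integral of a function vanishing nowhere on the set is zero, the set is null. -/
lemma aux_measure_zero_of_setLIntegral_zero {ν : Measure ℝ} {s : Set ℝ}
    (hs : MeasurableSet s) {f : ℝ → ℝ≥0∞} (hf : AEMeasurable f (ν.restrict s))
    (hpos : ∀ x ∈ s, f x ≠ 0) (h : ∫⁻ x in s, f x ∂ν = 0) : ν s = 0 := by
  have h1 : f =ᵐ[ν.restrict s] 0 := (lintegral_eq_zero_iff' hf).1 h
  have h2 : ∀ᵐ x ∂ν.restrict s, x ∈ s := ae_restrict_mem hs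
  have h3 : ∀ᵐ x ∂ν.restrict s, False := by
    filter_upwards [h1, h2] with x hx1 hx2
    exact hpos x hx2 hx1
  have h4 : ν.restrict s = 0 := ae_eq_bot.1 (Filter.eventually_false_iff_eq_bot.1 h3)
  exact Measure.restrict_eq_zero.1 h4

/-- σ-finiteness of a measure on `(0,∞)` with finite Laplace transform at `1`. -/
lemma aux_sigmaFinite {ν : Measure ℝ} (hν : ν (Iic 0) = 0)
    (h : ∫⁻ β, ENNReal.ofReal (Real.exp (-β * 1)) ∂ν ≠ ⊤) : SigmaFinite ν := by
  have hfin : ∀ n : ℕ, ν (Icc (1 / ((n : ℝ) + 1)) ((n : ℝ) + 1)) < ⊤ := by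
    intro n
    set b : ℝ := (n : ℝ) + 1
    have hb : (0 : ℝ) < b := by positivity
    have key : ENNReal.ofReal (Real.exp (-b)) * ν (Icc (1 / b) b)
        ≤ ∫⁻ β, ENNReal.ofReal (Real.exp (-β * 1)) ∂ν := by
      rw [← setLIntegral_const (Icc (1 / b) b) (ENNReal.ofReal (Real.exp (-b)))]
      refine le_trans (setLIntegral_mono' measurableSet_Icc ?_) (setLIntegral_le_lintegral _ _)
      intro x hx
      exact ENNReal.ofReal_le_ofReal (Real.exp_le_exp.2 (by rw [neg_mul, mul_one]; exact neg_le_neg hx.2))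
    by_contra hcon
    rw [not_lt, top_le_iff] at hcon
    rw [hcon, ENNReal.mul_top ((ENNReal.ofReal_pos.2 (Real.exp_pos (-b))).ne')] at key
    exact h (top_le_iff.1 key)
  refine Measure.sigmaFinite_of_countable
    (countable_range fun n : ℕ => Iic (0:ℝ) ∪ Icc (1 / ((n : ℝ) + 1)) ((n : ℝ) + 1)) ?_ ?_
  · rintro s ⟨n, rfl⟩
    calc ν (Iic 0 ∪ Icc (1 / ((n : ℝ) + 1)) ((n : ℝ) + 1))
        ≤ ν (Iic 0) + ν (Icc (1 / ((n : ℝ) + 1)) ((n : ℝ) + 1)) := measure_union_le _ _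
      _ < ⊤ := by rw [hν, zero_add]; exact hfin n
  · rw [sUnion_range]
    ext x
    simp only [mem_iUnion, mem_union, mem_Iic, mem_Icc, mem_univ, iff_true]
    rcases le_or_gt x 0 with hx | hx
    · exact ⟨0, Or.inl hx⟩
    · obtain ⟨n, hn⟩ := exists_nat_ge (max x (1 / x))
      refine ⟨n, Or.inr ⟨?_, ?_⟩⟩
      · have h1 : 1 / x ≤ (n : ℝ) + 1 :=
          le_trans (le_max_right x (1/x)) (hn.trans (le_add_of_nonneg_right zero_le_one))
        rw [div_le_iff₀ hx] at h1
        rw [div_le_iff₀ (by positivity : (0:ℝ) < (n:ℝ) + 1)]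
        exact le_of_le_of_eq h1 (mul_comm _ _)
      · exact le_trans (le_max_left x (1/x)) (hn.trans (le_add_of_nonneg_right zero_le_one))

/-- **Impossibility of local thermal equilibrium in non-canonical steady states.**
Let `Ω_B` be a density of states with partition function `Z_B(β)` finite and strictly
positive for all `β > 0`, and let `ν` be a Borel measure on `(0,∞)` (a measure on `ℝ`
vanishing on `(-∞,0]`) whose Laplace transform `ρ(E) = ∫ exp(-βE) dν(β)` is finite for
all `E > 0`. If the marginal ensemble `ε ↦ ∫₀^∞ Ω_B(E') ρ(ε+E') dE'` is canonical,
i.e. equal to `C · exp(-β₀ ε)` for some `C > 0`, `β₀ > 0`, then `ν` is the point mass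
`(C/Z_B(β₀)) · δ_{β₀}`, and hence `ρ(E) = (C/Z_B(β₀)) · exp(-β₀ E)` for all `E > 0`:
the whole steady state is canonical at inverse temperature `β₀`. -/
theorem no_LTE_in_noncanonical_steady_states
    (ΩB : ℝ → ℝ) (hΩB : Measurable ΩB) (hΩB0 : ∀ E, 0 ≤ ΩB E)
    (ZB : ℝ → ℝ≥0∞)
    (hZB : ∀ β, ZB β = ∫⁻ E in Ioi (0:ℝ), ENNReal.ofReal (ΩB E * Real.exp (-β * E)))
    (hZBpos : ∀ β > (0:ℝ), 0 < ZB β) (hZBfin : ∀ β > (0:ℝ), ZB β < ⊤)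
    (ν : Measure ℝ) (hν : ν (Iic 0) = 0)
    (ρ : ℝ → ℝ≥0∞)
    (hρ : ∀ E, ρ E = ∫⁻ β, ENNReal.ofReal (Real.exp (-β * E)) ∂ν)
    (hρfin : ∀ E > (0:ℝ), ρ E < ⊤)
    (C β₀ : ℝ) (hC : 0 < C) (hβ₀ : 0 < β₀)
    (hLTE : ∀ ε > (0:ℝ),
      ∫⁻ E' in Ioi (0:ℝ), ENNReal.ofReal (ΩB E') * ρ (ε + E')
        = ENNReal.ofReal (C * Real.exp (-β₀ * ε))) :
    ν = (ENNReal.ofReal C / ZB β₀) • Measure.dirac β₀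
    ∧ ∀ E > (0:ℝ),
        ρ E = (ENNReal.ofReal C / ZB β₀) * ENNReal.ofReal (Real.exp (-β₀ * E)) := by
  haveI : SigmaFinite ν := aux_sigmaFinite hν (by rw [← hρ 1]; exact (hρfin 1 one_pos).ne)
  have hZBmeas : Measurable ZB := by
    have h : Measurable fun β : ℝ =>
        ∫⁻ E, ENNReal.ofReal (ΩB E * Real.exp (-β * E)) ∂(volume.restrict (Ioi (0:ℝ))) := by
      apply Measurable.lintegral_prod_right'
        (f := fun p : ℝ × ℝ => ENNReal.ofReal (ΩB p.2 * Real.exp (-p.1 * p.2)))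
      exact ((hΩB.comp measurable_snd).mul
        ((measurable_fst.neg.mul measurable_snd).exp)).ennreal_ofReal
    have : ZB = fun β => ∫⁻ E in Ioi (0:ℝ), ENNReal.ofReal (ΩB E * Real.exp (-β * E)) :=
      funext hZB
    rw [this]; exact h
  -- Tonelli: the LTE hypothesis in terms of the Laplace transform of `ZB • ν`
  have hkey : ∀ ε > (0:ℝ), ∫⁻ β, ENNReal.ofReal (Real.exp (-β * ε)) * ZB β ∂ν
      = ENNReal.ofReal C * ENNReal.ofReal (Real.exp (-β₀ * ε)) := by
    intro ε hε
    have hmeas : AEMeasurable (Function.uncurry fun (E' β : ℝ) =>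
        ENNReal.ofReal (ΩB E') * ENNReal.ofReal (Real.exp (-β * (ε + E'))))
        ((volume.restrict (Ioi (0:ℝ))).prod ν) := by
      apply Measurable.aemeasurable
      exact ((hΩB.comp measurable_fst).ennreal_ofReal).mul
        ((measurable_snd.neg.mul (measurable_const.add measurable_fst)).exp).ennreal_ofReal
    have hswap := lintegral_lintegral_swap hmeas
    have h1 : ∫⁻ E' in Ioi (0:ℝ), ENNReal.ofReal (ΩB E') * ρ (ε + E')
        = ∫⁻ E' in Ioi (0:ℝ), ∫⁻ β,
            ENNReal.ofReal (ΩB E') * ENNReal.ofReal (Real.exp (-β * (ε + E'))) ∂ν := by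
      apply lintegral_congr
      intro E'
      rw [hρ (ε + E'), ← lintegral_const_mul' _ _ ENNReal.ofReal_ne_top]
    have h2 : ∀ β : ℝ, ∫⁻ E' in Ioi (0:ℝ),
        ENNReal.ofReal (ΩB E') * ENNReal.ofReal (Real.exp (-β * (ε + E')))
        = ENNReal.ofReal (Real.exp (-β * ε)) * ZB β := by
      intro β
      rw [hZB, ← lintegral_const_mul' _ _ ENNReal.ofReal_ne_top]
      apply lintegral_congr
      intro E'
      rw [← ENNReal.ofReal_mul (hΩB0 E'), ← ENNReal.ofReal_mul (Real.exp_nonneg _)]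
      congr 1
      rw [show -β * (ε + E') = -β * ε + -β * E' by ring, Real.exp_add]
      ring
    have h3 := hLTE ε hε
    rw [h1, hswap] at h3
    calc ∫⁻ β, ENNReal.ofReal (Real.exp (-β * ε)) * ZB β ∂ν
        = ∫⁻ β, (∫⁻ E' in Ioi (0:ℝ),
            ENNReal.ofReal (ΩB E') * ENNReal.ofReal (Real.exp (-β * (ε + E')))) ∂ν :=
          lintegral_congr fun β => (h2 β).symm
      _ = ENNReal.ofReal (C * Real.exp (-β₀ * ε)) := h3
      _ = ENNReal.ofReal C * ENNReal.ofReal (Real.exp (-β₀ * ε)) :=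
          ENNReal.ofReal_mul hC.le
  -- no mass below β₀
  have hlow : ν (Ioo 0 β₀) = 0 := by
    have hIoo : ∀ b : ℝ, 0 < b → b < β₀ → ν (Ioo 0 b) = 0 := by
      intro b hb hbβ
      have hbound : ∀ n : ℕ, ∫⁻ β in Ioo 0 b, ZB β ∂ν
          ≤ ENNReal.ofReal (C * Real.exp ((b - β₀) * ((n : ℝ) + 1))) := by
        intro n
        set ε : ℝ := (n : ℝ) + 1 with hε
        have hεpos : (0:ℝ) < ε := by positivity
        have step1 : ENNReal.ofReal (Real.exp (-b * ε)) * ∫⁻ β in Ioo 0 b, ZB β ∂ν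
            ≤ ENNReal.ofReal C * ENNReal.ofReal (Real.exp (-β₀ * ε)) := by
          rw [← lintegral_const_mul' _ _ ENNReal.ofReal_ne_top]
          refine le_trans ?_ (le_of_eq (hkey ε hεpos))
          refine le_trans (setLIntegral_mono' measurableSet_Ioo ?_)
            (setLIntegral_le_lintegral _ _)
          intro β hβ
          refine mul_le_mul_left (ENNReal.ofReal_le_ofReal (Real.exp_le_exp.2 ?_)) _
          have := hβ.2
          nlinarith
        have hiden : ENNReal.ofReal (Real.exp (-b * ε))
            * ENNReal.ofReal (C * Real.exp ((b - β₀) * ε))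
            = ENNReal.ofReal C * ENNReal.ofReal (Real.exp (-β₀ * ε)) := by
          rw [← ENNReal.ofReal_mul (Real.exp_nonneg _), ← ENNReal.ofReal_mul hC.le]
          congr 1
          rw [mul_comm, mul_assoc, ← Real.exp_add]
          congr 2
          ring
        rw [← hiden] at step1
        exact (ENNReal.mul_le_mul_iff_right
          (ENNReal.ofReal_pos.2 (Real.exp_pos _)).ne' ENNReal.ofReal_ne_top).1 step1
      have htend : Tendsto (fun n : ℕ =>
          ENNReal.ofReal (C * Real.exp ((b - β₀) * ((n : ℝ) + 1)))) atTop (𝓝 0) := by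
        have h1 : Tendsto (fun n : ℕ => (b - β₀) * ((n : ℝ) + 1)) atTop atBot := by
          rw [tendsto_const_mul_atBot_of_neg (by linarith : b - β₀ < 0)]
          exact tendsto_atTop_add_const_right _ 1 tendsto_natCast_atTop_atTop
        have h2 : Tendsto (fun n : ℕ => C * Real.exp ((b - β₀) * ((n : ℝ) + 1)))
            atTop (𝓝 0) := by
          simpa using (Real.tendsto_exp_atBot.comp h1).const_mul C
        simpa using ENNReal.tendsto_ofReal h2
      have hA0 : ∫⁻ β in Ioo 0 b, ZB β ∂ν = 0 :=
        le_antisymm (ge_of_tendsto' htend hbound) (zero_le)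
      exact aux_measure_zero_of_setLIntegral_zero measurableSet_Ioo
        hZBmeas.aemeasurable (fun x hx => (hZBpos x hx.1).ne') hA0
    have hunion : Ioo 0 β₀ ⊆ ⋃ n : ℕ, Ioo 0 (β₀ - β₀ / ((n : ℝ) + 2)) := by
      intro x hx
      have hx1 := hx.1
      have hx2 := hx.2
      obtain ⟨n, hn⟩ := exists_nat_gt (β₀ / (β₀ - x))
      refine mem_iUnion.2 ⟨n, hx1, ?_⟩
      have hβx : (0:ℝ) < β₀ - x := by linarith
      rw [div_lt_iff₀ hβx] at hn
      have h2 : β₀ / ((n : ℝ) + 2) < β₀ - x := by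
        rw [div_lt_iff₀ (by positivity : (0:ℝ) < (n : ℝ) + 2)]
        nlinarith [hβx]
      linarith
    refine measure_mono_null hunion (measure_iUnion_null fun n => ?_)
    have hlt : β₀ / ((n : ℝ) + 2) < β₀ := by
      rw [div_lt_iff₀ (by positivity : (0:ℝ) < (n : ℝ) + 2)]
      nlinarith
    have hgt : 0 < β₀ / ((n : ℝ) + 2) := by positivity
    exact hIoo _ (by linarith) (by linarith)
  have hIio : ν (Iio β₀) = 0 := by
    have hsub : Iio β₀ ⊆ Iic 0 ∪ Ioo 0 β₀ := by
      intro x hx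
      rcases le_or_gt x 0 with h | h
      · exact Or.inl h
      · exact Or.inr ⟨h, hx⟩
    exact measure_mono_null hsub (measure_union_null hν hlow)
  have hrestrict : ν.restrict (Ici β₀) = ν := by
    apply Measure.restrict_eq_self_of_ae_mem
    rw [ae_iff]
    have : {x : ℝ | ¬ x ∈ Ici β₀} = Iio β₀ := by ext x; simp [not_le]
    rw [this]; exact hIio
  -- decomposition of the Laplace transform over {β₀} ∪ (β₀,∞)
  have hdecomp : ∀ ε : ℝ, ∫⁻ β, ENNReal.ofReal (Real.exp (-β * ε)) * ZB β ∂ν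
      = ENNReal.ofReal (Real.exp (-β₀ * ε)) * ZB β₀ * ν {β₀}
        + ∫⁻ β in Ioi β₀, ENNReal.ofReal (Real.exp (-β * ε)) * ZB β ∂ν := by
    intro ε
    conv_lhs => rw [← hrestrict]
    rw [show Ici β₀ = insert β₀ (Ioi β₀) from (Set.Ioi_insert).symm,
      lintegral_insert (notMem_Ioi_self) _]
  set m : ℝ≥0∞ := ZB β₀ * ν {β₀} with hm
  have hmle : m ≤ ENNReal.ofReal C := by
    have h1 := hdecomp 1
    rw [hkey 1 one_pos] at h1
    have h2 : ENNReal.ofReal (Real.exp (-β₀ * 1)) * m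
        ≤ ENNReal.ofReal (Real.exp (-β₀ * 1)) * ENNReal.ofReal C := by
      calc ENNReal.ofReal (Real.exp (-β₀ * 1)) * m
          = ENNReal.ofReal (Real.exp (-β₀ * 1)) * ZB β₀ * ν {β₀} := by rw [hm, mul_assoc]
        _ ≤ ENNReal.ofReal C * ENNReal.ofReal (Real.exp (-β₀ * 1)) := h1 ▸ le_self_add
        _ = ENNReal.ofReal (Real.exp (-β₀ * 1)) * ENNReal.ofReal C := mul_comm _ _
    exact (ENNReal.mul_le_mul_iff_right
      (ENNReal.ofReal_pos.2 (Real.exp_pos _)).ne' ENNReal.ofReal_ne_top).1 h2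
  have hmtop : m ≠ ⊤ := ne_top_of_le_ne_top ENNReal.ofReal_ne_top hmle
  set d : ℝ≥0∞ := ENNReal.ofReal C - m with hd
  have hdtop : d ≠ ⊤ := ne_top_of_le_ne_top ENNReal.ofReal_ne_top tsub_le_self
  have hg : ∀ ε > (0:ℝ), ∫⁻ β in Ioi β₀, ENNReal.ofReal (Real.exp (-β * ε)) * ZB β ∂ν
      = d * ENNReal.ofReal (Real.exp (-β₀ * ε)) := by
    intro ε hε
    have h1 := hdecomp ε
    rw [hkey ε hε] at h1
    have hA : ENNReal.ofReal (Real.exp (-β₀ * ε)) * ZB β₀ * ν {β₀}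
        = ENNReal.ofReal (Real.exp (-β₀ * ε)) * m := by rw [hm, mul_assoc]
    rw [hA] at h1
    have hAtop : ENNReal.ofReal (Real.exp (-β₀ * ε)) * m ≠ ⊤ :=
      ENNReal.mul_ne_top ENNReal.ofReal_ne_top hmtop
    have h2 : ∫⁻ β in Ioi β₀, ENNReal.ofReal (Real.exp (-β * ε)) * ZB β ∂ν
        = ENNReal.ofReal C * ENNReal.ofReal (Real.exp (-β₀ * ε))
          - ENNReal.ofReal (Real.exp (-β₀ * ε)) * m :=
      (ENNReal.sub_eq_of_eq_add hAtop (by rw [add_comm] at h1; exact h1)).symm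
    rw [h2, hd, ENNReal.sub_mul (fun _ _ => ENNReal.ofReal_ne_top), mul_comm m _]
  have hresc : ∀ n : ℕ, ∫⁻ β in Ioi β₀,
      ENNReal.ofReal (Real.exp ((β₀ - β) * ((n : ℝ) + 1))) * ZB β ∂ν = d := by
    intro n
    set ε : ℝ := (n : ℝ) + 1 with hεdef
    have hεpos : (0:ℝ) < ε := by positivity
    have h1 : ∫⁻ β in Ioi β₀, ENNReal.ofReal (Real.exp ((β₀ - β) * ε)) * ZB β ∂ν
        = ∫⁻ β in Ioi β₀, ENNReal.ofReal (Real.exp (β₀ * ε))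
            * (ENNReal.ofReal (Real.exp (-β * ε)) * ZB β) ∂ν := by
      apply lintegral_congr
      intro β
      rw [← mul_assoc, ← ENNReal.ofReal_mul (Real.exp_nonneg _), ← Real.exp_add]
      congr 3
      ring
    rw [h1, lintegral_const_mul' _ _ ENNReal.ofReal_ne_top, hg ε hεpos, ← mul_assoc,
      mul_comm (ENNReal.ofReal (Real.exp (β₀ * ε))) d, mul_assoc,
      ← ENNReal.ofReal_mul (Real.exp_nonneg _), ← Real.exp_add]
    simp
  have hd0 : d = 0 := by
    have hDCT : Tendsto (fun n : ℕ => ∫⁻ β in Ioi β₀,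
        ENNReal.ofReal (Real.exp ((β₀ - β) * ((n : ℝ) + 1))) * ZB β ∂ν) atTop
        (𝓝 (∫⁻ _ in Ioi β₀, (0:ℝ≥0∞) ∂ν)) := by
      apply tendsto_lintegral_of_dominated_convergence
        (fun β => ENNReal.ofReal (Real.exp ((β₀ - β) * (((0:ℕ) : ℝ) + 1))) * ZB β)
      · intro n
        exact (((measurable_const.sub measurable_id).mul_const _).exp).ennreal_ofReal.mul hZBmeas
      · intro n
        filter_upwards [ae_restrict_mem measurableSet_Ioi] with β hβ
        refine mul_le_mul_left (ENNReal.ofReal_le_ofReal (Real.exp_le_exp.2 ?_)) _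
        have h1 : β₀ - β < 0 := by simp only [mem_Ioi] at hβ; linarith
        have h2 : (0:ℝ) ≤ (n : ℝ) := Nat.cast_nonneg n
        push_cast
        nlinarith
      · rw [hresc 0]; exact hdtop
      · filter_upwards [ae_restrict_mem measurableSet_Ioi] with β hβ
        simp only [mem_Ioi] at hβ
        have h1 : Tendsto (fun n : ℕ => (β₀ - β) * ((n : ℝ) + 1)) atTop atBot := by
          rw [tendsto_const_mul_atBot_of_neg (by linarith : β₀ - β < 0)]
          exact tendsto_atTop_add_const_right _ 1 tendsto_natCast_atTop_atTop
        have h2 : Tendsto (fun n : ℕ =>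
            ENNReal.ofReal (Real.exp ((β₀ - β) * ((n : ℝ) + 1)))) atTop (𝓝 0) := by
          simpa using ENNReal.tendsto_ofReal (Real.tendsto_exp_atBot.comp h1)
        simpa using ENNReal.Tendsto.mul_const h2 (Or.inr (hZBfin β (hβ₀.trans hβ)).ne)
    simp only [hresc, lintegral_zero] at hDCT
    exact tendsto_nhds_unique tendsto_const_nhds hDCT
  have hmC : ZB β₀ * ν {β₀} = ENNReal.ofReal C := by
    rw [← hm]
    exact le_antisymm hmle (tsub_eq_zero_iff_le.1 (hd ▸ hd0))
  have hIoi0 : ν (Ioi β₀) = 0 := by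
    refine aux_measure_zero_of_setLIntegral_zero measurableSet_Ioi
      (((measurable_neg.mul_const (1:ℝ)).exp.ennreal_ofReal.mul hZBmeas).aemeasurable)
      (fun x hx => mul_ne_zero (ENNReal.ofReal_pos.2 (Real.exp_pos _)).ne'
        (hZBpos x (hβ₀.trans hx)).ne') ?_
    show ∫⁻ β in Ioi β₀, ENNReal.ofReal (Real.exp (-β * 1)) * ZB β ∂ν = 0
    rw [hg 1 one_pos, hd0, zero_mul]
  have hsingleton : ν {β₀} = ENNReal.ofReal C / ZB β₀ :=
    (ENNReal.eq_div_iff (hZBpos β₀ hβ₀).ne' (hZBfin β₀ hβ₀).ne).2 hmC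
  have hν_eq : ν = (ENNReal.ofReal C / ZB β₀) • Measure.dirac β₀ := by
    ext s hs
    have hnull : ν (s \ {β₀}) = 0 := by
      refine measure_mono_null ?_
        (measure_union_null (measure_union_null hν hlow) hIoi0)
      intro x hx
      rcases lt_trichotomy x β₀ with h | h | h
      · rcases le_or_gt x 0 with h0 | h0
        · exact Or.inl (Or.inl h0)
        · exact Or.inl (Or.inr ⟨h0, h⟩)
      · exact absurd h hx.2
      · exact Or.inr h
    have hsplit : ν s = ν (s ∩ {β₀}) :=
      by rw [← measure_inter_add_diff s (measurableSet_singleton β₀), hnull, add_zero]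
    by_cases hb : β₀ ∈ s
    · rw [hsplit, Set.inter_eq_right.mpr (singleton_subset_iff.2 hb), hsingleton]
      simp [Measure.dirac_apply' _ hs, hb]
    · rw [hsplit, Set.inter_singleton_eq_empty.2 hb, measure_empty]
      simp [Measure.dirac_apply' _ hs, hb]
  refine ⟨hν_eq, fun E _ => ?_⟩
  rw [hρ E, hν_eq, lintegral_smul_measure,
    lintegral_dirac' _ ((measurable_neg.mul_const E).exp.ennreal_ofReal), smul_eq_mul]
end

section
/- Non-canonical steady states cannot have Maxwellian velocity distributions. Let m > 0, and let Ω_B : (0,∞) → [0,∞) be measurable with Z_B(β) := ∫₀^∞ Ω_B(E) exp(−βE) dE finite and strictly positive for all β > 0. Let ν be a Borel measure on (0,∞) with ρ(E) := ∫₀^∞ exp(−βE) dν(β) finite for all E > 0, describing a steady state in which the single-particle momentum p ∈ ℝ³ has marginal density P(p) = ∫₀^∞ Ω_B(E′) ρ(|p|²/(2m) + E′) dE′. If there exists β₀ > 0 such that P(p) = (β₀/(2πm))^{3/2} · exp(−β₀ |p|²/(2m)) for every p ∈ ℝ³ (a Maxwellian distribution), then ν is the point mass ((β₀/(2πm))^{3/2}/Z_B(β₀))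 · δ_{β₀}, so ρ(E) is proportional to exp(−β₀ E); i.e. the steady state is canonical. -/
open MeasureTheory Set ENNReal

/-- **Non-canonical steady states cannot have Maxwellian velocity distributions.**
Let `m > 0`, let `Ω_B` be the density of states of the remaining degrees of freedom
with partition function `Z_B(β)` finite and positive for `β > 0`, and let `ν` be a
Borel measure on `(0,∞)` whose Laplace transform `ρ(E) = ∫ exp(-βE) dν(β)` is finite
for `E > 0`, describing a steady state in which the single-particle momentum `p ∈ ℝ³`
has marginal density `P(p) = ∫₀^∞ Ω_B(E') ρ(‖p‖²/(2m) + E') dE'`. If this marginal is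
Maxwellian at inverse temperature `β₀`, then `ν` is the point mass
`((β₀/(2πm))^{3/2}/Z_B(β₀)) · δ_{β₀}`, so `ρ(E)` is proportional to `exp(-β₀E)`:
the steady state is canonical. -/
theorem noncanonical_no_maxwellian
    (m : ℝ) (hm : 0 < m)
    (ΩB : ℝ → ℝ) (hΩB : Measurable ΩB) (hΩB0 : ∀ E, 0 ≤ ΩB E)
    (ZB : ℝ → ℝ≥0∞)
    (hZB : ∀ β, ZB β = ∫⁻ E in Ioi (0:ℝ), ENNReal.ofReal (ΩB E * Real.exp (-β * E)))
    (hZBpos : ∀ β > (0:ℝ), 0 < ZB β) (hZBfin : ∀ β > (0:ℝ), ZB β < ⊤)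
    (ν : Measure ℝ) (hν : ν (Iic 0) = 0)
    (ρ : ℝ → ℝ≥0∞)
    (hρ : ∀ E, ρ E = ∫⁻ β, ENNReal.ofReal (Real.exp (-β * E)) ∂ν)
    (hρfin : ∀ E > (0:ℝ), ρ E < ⊤)
    (β₀ : ℝ) (hβ₀ : 0 < β₀)
    (hmaxwell : ∀ p : EuclideanSpace ℝ (Fin 3),
      ∫⁻ E' in Ioi (0:ℝ), ENNReal.ofReal (ΩB E') * ρ (‖p‖ ^ 2 / (2 * m) + E')
        = ENNReal.ofReal ((β₀ / (2 * Real.pi * m)) ^ ((3:ℝ)/2)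
            * Real.exp (-β₀ * ‖p‖ ^ 2 / (2 * m)))) :
    ν = (ENNReal.ofReal ((β₀ / (2 * Real.pi * m)) ^ ((3:ℝ)/2)) / ZB β₀)
          • Measure.dirac β₀
    ∧ ∀ E > (0:ℝ),
        ρ E = (ENNReal.ofReal ((β₀ / (2 * Real.pi * m)) ^ ((3:ℝ)/2)) / ZB β₀)
                * ENNReal.ofReal (Real.exp (-β₀ * E)) := by
  -- ν is σ-finite
  have hsf : SigmaFinite ν := by
    have hfin : ∀ n : ℕ, ν (Iic (0:ℝ) ∪ Ioc 0 n) < ⊤ := by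
      intro n
      have h0 : ENNReal.ofReal (Real.exp (-(n:ℝ))) * ν (Ioc (0:ℝ) n) ≤ ρ 1 := by
        calc ENNReal.ofReal (Real.exp (-(n:ℝ))) * ν (Ioc (0:ℝ) n)
            = ∫⁻ _ in Ioc (0:ℝ) n, ENNReal.ofReal (Real.exp (-(n:ℝ))) ∂ν :=
              (setLIntegral_const _ _).symm
          _ ≤ ∫⁻ β in Ioc (0:ℝ) n, ENNReal.ofReal (Real.exp (-β * 1)) ∂ν := by
              refine setLIntegral_mono
                ((measurable_neg.mul measurable_const).exp.ennreal_ofReal) fun β hβ => ?_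
              exact ENNReal.ofReal_le_ofReal (Real.exp_le_exp.2 (by simpa using hβ.2))
          _ ≤ ∫⁻ β, ENNReal.ofReal (Real.exp (-β * 1)) ∂ν := setLIntegral_le_lintegral _ _
          _ = ρ 1 := (hρ 1).symm
      have h1 : ν (Ioc (0:ℝ) n) < ⊤ := by
        by_contra h
        push_neg at h
        rw [top_le_iff.mp h, ENNReal.mul_top (by positivity)] at h0
        exact (hρfin 1 one_pos).ne (top_le_iff.mp h0)
      calc ν (Iic (0:ℝ) ∪ Ioc 0 n) ≤ ν (Iic 0) + ν (Ioc 0 n) := measure_union_le _ _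
        _ < ⊤ := by rw [hν, zero_add]; exact h1
    refine ⟨⟨⟨fun n => Iic (0:ℝ) ∪ Ioc 0 n, fun _ => trivial, hfin, ?_⟩⟩⟩
    ext y
    simp only [mem_iUnion, mem_univ, iff_true, mem_union, mem_Iic, mem_Ioc]
    rcases le_or_gt y 0 with h | h
    · exact ⟨0, Or.inl h⟩
    · exact ⟨⌈y⌉₊, Or.inr ⟨h, Nat.le_ceil y⟩⟩
  -- measurability of ZB
  have hZBm : Measurable ZB := by
    have h : ZB = fun β => ∫⁻ E in Ioi (0:ℝ), ENNReal.ofReal (ΩB E * Real.exp (-β * E)) :=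
      funext hZB
    rw [h]
    exact Measurable.lintegral_prod_right'
      (f := fun q : ℝ × ℝ => ENNReal.ofReal (ΩB q.2 * Real.exp (-q.1 * q.2)))
      (((hΩB.comp measurable_snd).mul
        ((measurable_fst.neg.mul measurable_snd).exp)).ennreal_ofReal)
  set C : ℝ := (β₀ / (2 * Real.pi * m)) ^ ((3:ℝ)/2) with hCdef
  have hCpos : 0 < C := Real.rpow_pos_of_pos (by positivity) _
  -- the Laplace transform identity
  have hg : ∀ x : ℝ, 0 ≤ x →
      ∫⁻ β, ENNReal.ofReal (Real.exp (-β * x)) * ZB β ∂ν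
        = ENNReal.ofReal (C * Real.exp (-β₀ * x)) := by
    intro x hx
    set p : EuclideanSpace ℝ (Fin 3) := EuclideanSpace.single 0 (Real.sqrt (2*m*x)) with hp
    have hpn : ‖p‖ ^ 2 = 2*m*x := by
      rw [hp, EuclideanSpace.norm_single, Real.norm_eq_abs, sq_abs,
        Real.sq_sqrt (by positivity)]
    have hx' : ‖p‖ ^ 2 / (2 * m) = x := by rw [hpn]; field_simp
    have hmax := hmaxwell p
    rw [mul_div_assoc, hx'] at hmax
    have hmeas : Measurable (Function.uncurry fun E' β =>
        ENNReal.ofReal (ΩB E') * ENNReal.ofReal (Real.exp (-β * (x + E')))) := by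
      refine Measurable.mul (f := fun q : ℝ × ℝ => ENNReal.ofReal (ΩB q.1))
        (g := fun q : ℝ × ℝ => ENNReal.ofReal (Real.exp (-q.2 * (x + q.1)))) ?_ ?_
      · exact (hΩB.comp measurable_fst).ennreal_ofReal
      · exact ((measurable_snd.neg.mul (measurable_fst.const_add x)).exp).ennreal_ofReal
    have key : ∫⁻ E' in Ioi (0:ℝ), ENNReal.ofReal (ΩB E') * ρ (x + E')
        = ∫⁻ β, ENNReal.ofReal (Real.exp (-β * x)) * ZB β ∂ν := by
      calc ∫⁻ E' in Ioi (0:ℝ), ENNReal.ofReal (ΩB E') * ρ (x + E')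
          = ∫⁻ E' in Ioi (0:ℝ), ∫⁻ β,
              ENNReal.ofReal (ΩB E') * ENNReal.ofReal (Real.exp (-β * (x + E'))) ∂ν := by
            refine setLIntegral_congr_fun measurableSet_Ioi (fun E' _ => ?_)
            rw [hρ, lintegral_const_mul' _ _ ofReal_ne_top]
        _ = ∫⁻ β, (∫⁻ E' in Ioi (0:ℝ),
              ENNReal.ofReal (ΩB E') * ENNReal.ofReal (Real.exp (-β * (x + E')))) ∂ν := by
            exact lintegral_lintegral_swap hmeas.aemeasurable
        _ = ∫⁻ β, ENNReal.ofReal (Real.exp (-β * x)) * ZB β ∂ν := by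
            refine lintegral_congr fun β => ?_
            rw [hZB, ← lintegral_const_mul' _ _ ofReal_ne_top]
            refine setLIntegral_congr_fun measurableSet_Ioi (fun E' _ => ?_)
            rw [← ENNReal.ofReal_mul (Real.exp_nonneg _), ← ENNReal.ofReal_mul (hΩB0 E')]
            congr 1
            rw [show -β * (x + E') = (-β*x) + (-β*E') by ring, Real.exp_add]
            ring
    rw [← key, hmax]
  have A0 : ∫⁻ β, ZB β ∂ν = ENNReal.ofReal C := by
    have := hg 0 le_rfl
    simpa using this
  have A1 : ∫⁻ β, ENNReal.ofReal (Real.exp (-β)) * ZB β ∂ν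
      = ENNReal.ofReal (C * Real.exp (-β₀)) := by
    have := hg 1 zero_le_one
    simpa using this
  have A2 : ∫⁻ β, ENNReal.ofReal (Real.exp (-β * 2)) * ZB β ∂ν
      = ENNReal.ofReal (C * Real.exp (-β₀ * 2)) := hg 2 (by norm_num)
  -- the variance trick
  set q : ℝ → ℝ := fun β => (Real.exp (-β) - Real.exp (-β₀))^2 with hqdef
  have hmeasq : Measurable fun β => ENNReal.ofReal (q β) * ZB β :=
    (((Real.measurable_exp.comp measurable_neg).sub measurable_const).pow_const 2).ennreal_ofReal.mul hZBm
  have hzero : ∫⁻ β, ENNReal.ofReal (q β) * ZB β ∂ν = 0 := by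
    have hptw : ∀ β, ENNReal.ofReal (q β) * ZB β
          + (2 * ENNReal.ofReal (Real.exp (-β₀))) * (ENNReal.ofReal (Real.exp (-β)) * ZB β)
        = ENNReal.ofReal (Real.exp (-β * 2)) * ZB β
          + ENNReal.ofReal (Real.exp (-β₀ * 2)) * ZB β := by
      intro β
      rw [← mul_assoc, ← add_mul, ← add_mul]
      congr 1
      rw [show (2:ℝ≥0∞) = ENNReal.ofReal 2 by simp,
        ← ENNReal.ofReal_mul (by norm_num), ← ENNReal.ofReal_mul (by positivity),
        ← ENNReal.ofReal_add (by positivity) (by positivity),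
        ← ENNReal.ofReal_add (by positivity) (by positivity)]
      congr 1
      have e1 : Real.exp (-β * 2) = Real.exp (-β) ^ 2 := by
        rw [show -β * 2 = -β + -β by ring, Real.exp_add, sq]
      have e2 : Real.exp (-β₀ * 2) = Real.exp (-β₀) ^ 2 := by
        rw [show -β₀ * 2 = -β₀ + -β₀ by ring, Real.exp_add, sq]
      rw [hqdef, e1, e2]; ring
    have hint : ∫⁻ β, (ENNReal.ofReal (q β) * ZB β
          + (2 * ENNReal.ofReal (Real.exp (-β₀))) * (ENNReal.ofReal (Real.exp (-β)) * ZB β)) ∂ν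
        = ∫⁻ β, (ENNReal.ofReal (Real.exp (-β * 2)) * ZB β
          + ENNReal.ofReal (Real.exp (-β₀ * 2)) * ZB β) ∂ν := lintegral_congr hptw
    rw [lintegral_add_left hmeasq, lintegral_const_mul' _ _ (by finiteness),
      lintegral_add_left (f := fun β => ENNReal.ofReal (Real.exp (-β * 2)) * ZB β)
        (((measurable_neg.mul measurable_const).exp.ennreal_ofReal).mul hZBm),
      lintegral_const_mul' _ _ ofReal_ne_top, A0, A1, A2] at hint
    have hc : (2 * ENNReal.ofReal (Real.exp (-β₀))) * ENNReal.ofReal (C * Real.exp (-β₀))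
        = ENNReal.ofReal (C * Real.exp (-β₀ * 2))
          + ENNReal.ofReal (Real.exp (-β₀ * 2)) * ENNReal.ofReal C := by
      rw [show (2:ℝ≥0∞) = ENNReal.ofReal 2 by simp,
        ← ENNReal.ofReal_mul (by norm_num), ← ENNReal.ofReal_mul (by positivity),
        ← ENNReal.ofReal_mul (Real.exp_nonneg _),
        ← ENNReal.ofReal_add (by positivity) (by positivity)]
      congr 1
      rw [show -β₀ * 2 = -β₀ + -β₀ by ring, Real.exp_add]
      ring
    rw [hc] at hint
    have hfin : ENNReal.ofReal (C * Real.exp (-β₀ * 2))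
        + ENNReal.ofReal (Real.exp (-β₀ * 2)) * ENNReal.ofReal C ≠ ⊤ := by finiteness
    have h00 : ∫⁻ β, ENNReal.ofReal (q β) * ZB β ∂ν
        + (ENNReal.ofReal (C * Real.exp (-β₀ * 2))
          + ENNReal.ofReal (Real.exp (-β₀ * 2)) * ENNReal.ofReal C)
        = 0 + (ENNReal.ofReal (C * Real.exp (-β₀ * 2))
          + ENNReal.ofReal (Real.exp (-β₀ * 2)) * ENNReal.ofReal C) := by
      rw [zero_add]; exact hint
    exact (ENNReal.add_left_inj hfin).mp h00
  -- ν-a.e. β = β₀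
  have haepos : ∀ᵐ β ∂ν, β ∈ Ioi (0:ℝ) := by
    rw [ae_iff]
    convert hν using 2
    ext β; simp [not_lt]
  have haeq : ∀ᵐ β ∂ν, β = β₀ := by
    have hae := (lintegral_eq_zero_iff hmeasq).mp hzero
    filter_upwards [hae, haepos] with β h1 h2
    have hZ : ZB β ≠ 0 := (hZBpos β h2).ne'
    have hq0 : ENNReal.ofReal (q β) = 0 := by
      rcases mul_eq_zero.mp h1 with h | h
      · exact h
      · exact absurd h hZ
    have : q β = 0 := le_antisymm (ofReal_eq_zero.mp hq0) (sq_nonneg _)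
    have hexp : Real.exp (-β) = Real.exp (-β₀) := by
      have h3 : (Real.exp (-β) - Real.exp (-β₀))^2 = 0 := this
      have h4 := pow_eq_zero_iff (by norm_num : (2:ℕ) ≠ 0) |>.mp h3
      linarith
    exact neg_injective (Real.exp_eq_exp.mp hexp)
  have hcompl : ν ({β₀}ᶜ) = 0 := by
    rw [ae_iff] at haeq
    convert haeq using 2
    ext; simp
  -- value of ν {β₀}
  have hsplit : ZB β₀ * ν {β₀} = ENNReal.ofReal C := by
    have h1 : ∫⁻ β, ZB β ∂ν
        = ∫⁻ β in {β₀}, ZB β ∂ν + ∫⁻ β in ({β₀}ᶜ : Set ℝ), ZB β ∂ν :=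
      (lintegral_add_compl _ (measurableSet_singleton β₀)).symm
    rw [setLIntegral_measure_zero _ _ hcompl, add_zero, lintegral_singleton' hZBm] at h1
    rw [← A0, h1, mul_comm]
  have hνβ : ν {β₀} = ENNReal.ofReal C / ZB β₀ :=
    (ENNReal.eq_div_iff (hZBpos β₀ hβ₀).ne' (hZBfin β₀ hβ₀).ne).mpr hsplit
  have hνeq : ν = (ENNReal.ofReal C / ZB β₀) • Measure.dirac β₀ := by
    ext s hs
    rw [Measure.smul_apply, Measure.dirac_apply' _ hs, smul_eq_mul]
    by_cases h : β₀ ∈ s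
    · have hd : ν (s \ {β₀}) = 0 :=
        measure_mono_null (by rw [diff_eq]; exact inter_subset_right) hcompl
      have h2 : ν s = ν {β₀} := by
        apply le_antisymm
        · calc ν s ≤ ν (s ∩ {β₀}) + ν (s \ {β₀}) := measure_le_inter_add_diff _ _ _
            _ = ν (s ∩ {β₀}) := by rw [hd, add_zero]
            _ ≤ ν {β₀} := measure_mono inter_subset_right
        · exact measure_mono (singleton_subset_iff.mpr h)
      rw [h2, hνβ, indicator_of_mem h, Pi.one_apply, mul_one]
    · rw [indicator_of_notMem h, mul_zero]
      exact measure_mono_null (subset_compl_comm.mp (singleton_subset_iff.mpr h)) hcompl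
  refine ⟨hνeq, fun E hE => ?_⟩
  rw [hρ, hνeq]
  rw [lintegral_smul_measure, lintegral_dirac]
  exact smul_eq_mul _ _
end

section
/- Fundamental inverse temperature of a marginal ensemble. Let f : (0,∞) → [0,∞) be measurable with ρ(E) := ∫₀^∞ f(β) exp(−βE) dβ finite and strictly positive for every E > 0, and let β_F(E) := −ρ′(E)/ρ(E). Let Ω_B : (0,∞) → [0,∞) be measurable, not almost everywhere zero, such that ρ_A(ε) := ∫₀^∞ Ω_B(E′) ρ(ε + E′) dE′ and ∫₀^∞ Ω_B(E′) · (−ρ′(ε + E′)) dE′ are finite for every ε > 0. Then ρ_A is differentiable on (0,∞) with ρ_A′(ε) = ∫₀^∞ Ω_B(E′) ρ′(ε + E′) dE′, and the fundamental inverse temperature of the marginal ensemble satisfies β_F^{(A)}(ε) := −ρ_A′(ε)/ρ_A(ε) = ∫₀^∞ Ω_B(E′) β_F(ε + E′) ρ̣(ε + E′) dE′ / ρ_A(ε); i.e. β_F^{(A)}(ε) is the expectation of β_F(E) under the conditional density P(E|ε) := Ω_B(E−ε) ρ(E)/ρ_A(ε) supported on E > ε. -/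
open MeasureTheory Set

private lemma exp_mul_le' {c : ℝ} (hc : 0 < c) {b : ℝ} (hb : 0 < b) :
    b * Real.exp (-b * c) ≤ (2 / c) * Real.exp (-b * (c / 2)) := by
  have h1 : b * (c / 2) ≤ Real.exp (b * (c / 2)) :=
    le_trans (by linarith) (Real.add_one_le_exp _)
  have hb' : b ≤ (2 / c) * Real.exp (b * (c / 2)) := by
    rw [div_mul_eq_mul_div, le_div_iff₀ hc]
    nlinarith
  calc b * Real.exp (-b * c) ≤ (2 / c) * Real.exp (b * (c / 2)) * Real.exp (-b * c) := by
        apply mul_le_mul_of_nonneg_right hb' (Real.exp_nonneg _)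
    _ = (2 / c) * Real.exp (-b * (c / 2)) := by
        rw [mul_assoc, ← Real.exp_add]; ring_nf

private lemma integrable_beta_aux (f : ℝ → ℝ) (hf : Measurable f) (hf0 : ∀ β, 0 ≤ f β)
    (hρint : ∀ E > (0:ℝ),
      IntegrableOn (fun β => f β * Real.exp (-β * E)) (Ioi (0:ℝ)))
    {E : ℝ} (hE : 0 < E) :
    IntegrableOn (fun β => β * (f β * Real.exp (-β * E))) (Ioi (0:ℝ)) := by
  have h := (hρint (E / 2 / 2) (by positivity)).const_mul (2 / (E / 2))
  refine Integrable.mono h ?_ ?_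
  · exact (measurable_id.mul (hf.mul (by fun_prop))).aestronglyMeasurable
  · filter_upwards [self_mem_ae_restrict (measurableSet_Ioi : MeasurableSet (Ioi (0:ℝ)))]
      with β hβ
    have hβ0 : (0:ℝ) < β := hβ
    have h1 : β * Real.exp (-β * E) ≤ (2 / (E / 2)) * Real.exp (-β * (E / 2 / 2)) := by
      calc β * Real.exp (-β * E) ≤ β * Real.exp (-β * (E / 2)) := by
            apply mul_le_mul_of_nonneg_left _ hβ0.le
            apply Real.exp_le_exp.2; nlinarith
        _ ≤ (2 / (E / 2)) * Real.exp (-β * (E / 2 / 2)) :=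
            exp_mul_le' (by positivity) hβ0
    rw [Real.norm_eq_abs, Real.norm_eq_abs,
      abs_of_nonneg (mul_nonneg hβ0.le (mul_nonneg (hf0 β) (Real.exp_nonneg _))),
      abs_of_nonneg (mul_nonneg (by positivity) (mul_nonneg (hf0 β) (Real.exp_nonneg _)))]
    calc β * (f β * Real.exp (-β * E)) = f β * (β * Real.exp (-β * E)) := by ring
      _ ≤ f β * ((2 / (E / 2)) * Real.exp (-β * (E / 2 / 2))) :=
          mul_le_mul_of_nonneg_left h1 (hf0 β)
      _ = 2 / (E / 2) * (f β * Real.exp (-β * (E / 2 / 2))) := by ring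

private lemma rho_hasDerivAt (f : ℝ → ℝ) (hf : Measurable f) (hf0 : ∀ β, 0 ≤ f β)
    (ρ : ℝ → ℝ)
    (hρdef : ∀ E, ρ E = ∫ β in Ioi (0:ℝ), f β * Real.exp (-β * E))
    (hρint : ∀ E > (0:ℝ),
      IntegrableOn (fun β => f β * Real.exp (-β * E)) (Ioi (0:ℝ)))
    {E : ℝ} (hE : 0 < E) :
    HasDerivAt ρ (-∫ β in Ioi (0:ℝ), β * (f β * Real.exp (-β * E))) E := by
  have key := hasDerivAt_integral_of_dominated_loc_of_deriv_le
    (μ := volume.restrict (Ioi (0:ℝ)))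
    (F := fun x β => f β * Real.exp (-β * x))
    (F' := fun x β => -(β * (f β * Real.exp (-β * x))))
    (x₀ := E)
    (bound := fun β => (2 / (E / 2)) * (f β * Real.exp (-β * (E / 2 / 2))))
    (Metric.ball_mem_nhds E (half_pos hE))
    (Filter.Eventually.of_forall fun x =>
      ((hf.mul (by fun_prop)).aestronglyMeasurable))
    ?_ ?_ ?_ ?_ ?_
  · have hfun : ρ = fun x => ∫ β in Ioi (0:ℝ), f β * Real.exp (-β * x) := funext hρdef
    rw [hfun]
    have := key.2
    simpa [integral_neg] using this
  · exact hρint E hE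
  · exact ((measurable_id.mul (hf.mul (by fun_prop))).neg).aestronglyMeasurable
  · filter_upwards [self_mem_ae_restrict (measurableSet_Ioi : MeasurableSet (Ioi (0:ℝ)))]
      with β hβ x hx
    have hβ0 : (0:ℝ) < β := hβ
    have hx2 : E / 2 < x := by
      have := abs_lt.1 (mem_ball_iff_norm.1 hx); linarith [this.1]
    rw [norm_neg, Real.norm_eq_abs,
      abs_of_nonneg (mul_nonneg hβ0.le (mul_nonneg (hf0 β) (Real.exp_nonneg _)))]
    have h1 : β * Real.exp (-β * x) ≤ (2 / (E / 2)) * Real.exp (-β * (E / 2 / 2)) := by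
      calc β * Real.exp (-β * x) ≤ β * Real.exp (-β * (E / 2)) := by
            apply mul_le_mul_of_nonneg_left _ hβ0.le
            apply Real.exp_le_exp.2; nlinarith
        _ ≤ (2 / (E / 2)) * Real.exp (-β * (E / 2 / 2)) :=
            exp_mul_le' (by positivity) hβ0
    calc β * (f β * Real.exp (-β * x)) = f β * (β * Real.exp (-β * x)) := by ring
      _ ≤ f β * ((2 / (E / 2)) * Real.exp (-β * (E / 2 / 2))) :=
          mul_le_mul_of_nonneg_left h1 (hf0 β)
      _ = (2 / (E / 2)) * (f β * Real.exp (-β * (E / 2 / 2))) := by ring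
  · exact (hρint (E / 2 / 2) (by positivity)).const_mul _
  · filter_upwards [self_mem_ae_restrict (measurableSet_Ioi : MeasurableSet (Ioi (0:ℝ)))]
      with β hβ x hx
    have h1 : HasDerivAt (fun x => -β * x) (-β * 1) x := (hasDerivAt_id x).const_mul (-β)
    have h2 := (h1.exp).const_mul (f β)
    convert h2 using 1
    · rfl
    · ring

private lemma deriv_rho_eq (f : ℝ → ℝ) (hf : Measurable f) (hf0 : ∀ β, 0 ≤ f β)
    (ρ : ℝ → ℝ)
    (hρdef : ∀ E, ρ E = ∫ β in Ioi (0:ℝ), f β * Real.exp (-β * E))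
    (hρint : ∀ E > (0:ℝ),
      IntegrableOn (fun β => f β * Real.exp (-β * E)) (Ioi (0:ℝ)))
    {E : ℝ} (hE : 0 < E) :
    deriv ρ E = -∫ β in Ioi (0:ℝ), β * (f β * Real.exp (-β * E)) :=
  (rho_hasDerivAt f hf hf0 ρ hρdef hρint hE).deriv

private lemma neg_deriv_mono (f : ℝ → ℝ) (hf : Measurable f) (hf0 : ∀ β, 0 ≤ f β)
    (ρ : ℝ → ℝ)
    (hρdef : ∀ E, ρ E = ∫ β in Ioi (0:ℝ), f β * Real.exp (-β * E))
    (hρint : ∀ E > (0:ℝ),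
      IntegrableOn (fun β => f β * Real.exp (-β * E)) (Ioi (0:ℝ)))
    {a b : ℝ} (ha : 0 < a) (hab : a ≤ b) :
    -deriv ρ b ≤ -deriv ρ a ∧ 0 ≤ -deriv ρ b := by
  have hb : 0 < b := lt_of_lt_of_le ha hab
  rw [deriv_rho_eq f hf hf0 ρ hρdef hρint ha, deriv_rho_eq f hf hf0 ρ hρdef hρint hb,
    neg_neg, neg_neg]
  constructor
  · apply setIntegral_mono_on (integrable_beta_aux f hf hf0 hρint hb)
      (integrable_beta_aux f hf hf0 hρint ha) measurableSet_Ioi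
    intro β hβ
    have hβ0 : (0:ℝ) < β := hβ
    have : Real.exp (-β * b) ≤ Real.exp (-β * a) := by
      apply Real.exp_le_exp.2; nlinarith
    nlinarith [hf0 β, mul_le_mul_of_nonneg_left this (hf0 β)]
  · apply setIntegral_nonneg measurableSet_Ioi
    intro β hβ
    have hβ0 : (0:ℝ) < β := hβ
    exact mul_nonneg hβ0.le (mul_nonneg (hf0 β) (Real.exp_nonneg _))

/-- **Fundamental inverse temperature of a marginal ensemble.** Let `ρ` be the
ensemble function of a superstatistical weight `f`, finite and strictly positive for
all `E > 0`, with fundamental inverse temperature `β_F(E) = -ρ'(E)/ρ(E)`. Let `Ω_B`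
be a density of states, not almost everywhere zero, such that the marginal ensemble
function `ρ_A(ε) = ∫₀^∞ Ω_B(E') ρ(ε+E') dE'` and `∫₀^∞ Ω_B(E') (-ρ'(ε+E')) dE'` are
finite for all `ε > 0`. Then `ρ_A` is differentiable on `(0,∞)` with
`ρ_A'(ε) = ∫₀^∞ Ω_B(E') ρ'(ε+E') dE'`, and the fundamental inverse temperature of the
marginal ensemble, `β_F^{(A)}(ε) = -ρ_A'(ε)/ρ_A(ε)`, equals the expectation
`∫₀^∞ Ω_B(E') β_F(ε+E') ρ(ε+E') dE' / ρ_A(ε)` of `β_F` under the conditional density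
`P(E|ε) = Ω_B(E-ε) ρ(E)/ρ_A(ε)` supported on `E > ε`. -/
theorem fundamental_inverse_temperature_of_marginal_ensemble
    (f : ℝ → ℝ) (hf : Measurable f) (hf0 : ∀ β, 0 ≤ f β)
    (ρ : ℝ → ℝ)
    (hρdef : ∀ E, ρ E = ∫ β in Ioi (0:ℝ), f β * Real.exp (-β * E))
    (hρint : ∀ E > (0:ℝ),
      IntegrableOn (fun β => f β * Real.exp (-β * E)) (Ioi (0:ℝ)))
    (hρpos : ∀ E > (0:ℝ), 0 < ρ E)
    (βF : ℝ → ℝ) (hβF : ∀ E, βF E = -deriv ρ E / ρ E)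
    (ΩB : ℝ → ℝ) (hΩB : Measurable ΩB) (hΩB0 : ∀ E, 0 ≤ ΩB E)
    (hΩBne : ¬ (∀ᵐ E ∂(volume.restrict (Ioi (0:ℝ))), ΩB E = 0))
    (ρA : ℝ → ℝ)
    (hρAdef : ∀ ε, ρA ε = ∫ E' in Ioi (0:ℝ), ΩB E' * ρ (ε + E'))
    (hρAint : ∀ ε > (0:ℝ),
      IntegrableOn (fun E' => ΩB E' * ρ (ε + E')) (Ioi (0:ℝ)))
    (hρA'int : ∀ ε > (0:ℝ),
      IntegrableOn (fun E' => ΩB E' * (-(deriv ρ (ε + E')))) (Ioi (0:ℝ))) :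
    ∀ ε > (0:ℝ),
      HasDerivAt ρA (∫ E' in Ioi (0:ℝ), ΩB E' * deriv ρ (ε + E')) ε
      ∧ -deriv ρA ε / ρA ε
          = (∫ E' in Ioi (0:ℝ), ΩB E' * (βF (ε + E') * ρ (ε + E'))) / ρA ε := by
  intro ε hε
  have key := hasDerivAt_integral_of_dominated_loc_of_deriv_le
    (μ := volume.restrict (Ioi (0:ℝ)))
    (F := fun x E' => ΩB E' * ρ (x + E'))
    (F' := fun x E' => ΩB E' * deriv ρ (x + E'))
    (x₀ := ε)
    (bound := fun E' => ΩB E' * (-(deriv ρ (ε / 2 + E'))))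
    (Metric.ball_mem_nhds ε (half_pos hε))
    ?_ (hρAint ε hε) ?_ ?_ (hρA'int (ε / 2) (half_pos hε)) ?_
  · have hfun : ρA = fun x => ∫ E' in Ioi (0:ℝ), ΩB E' * ρ (x + E') := funext hρAdef
    have hA : HasDerivAt ρA (∫ E' in Ioi (0:ℝ), ΩB E' * deriv ρ (ε + E')) ε := by
      rw [hfun]; exact key.2
    refine ⟨hA, ?_⟩
    rw [hA.deriv]
    congr 1
    rw [← neg_one_mul, ← integral_const_mul]
    apply setIntegral_congr_fun measurableSet_Ioi
    intro E' hE'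
    have hE'0 : (0:ℝ) < E' := hE'
    have hpos := hρpos (ε + E') (by linarith)
    dsimp only
    rw [hβF (ε + E'), div_mul_cancel₀ _ (ne_of_gt hpos)]
    ring
  · filter_upwards [Metric.ball_mem_nhds ε (half_pos hε)] with x hx
    have hx2 : ε / 2 < x := by
      have := abs_lt.1 (mem_ball_iff_norm.1 hx); linarith [this.1]
    exact (hρAint x (by linarith)).aestronglyMeasurable
  · exact (hΩB.mul ((measurable_deriv ρ).comp (measurable_const_add ε))).aestronglyMeasurable
  · filter_upwards [self_mem_ae_restrict (measurableSet_Ioi : MeasurableSet (Ioi (0:ℝ)))]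
      with E' hE' x hx
    have hE'0 : (0:ℝ) < E' := hE'
    have hx2 : ε / 2 < x := by
      have := abs_lt.1 (mem_ball_iff_norm.1 hx); linarith [this.1]
    have hmono := neg_deriv_mono f hf hf0 ρ hρdef hρint
      (a := ε / 2 + E') (b := x + E') (by linarith) (by linarith)
    rw [Real.norm_eq_abs, abs_mul, abs_of_nonneg (hΩB0 E')]
    have : |deriv ρ (x + E')| = -(deriv ρ (x + E')) := by
      rw [abs_of_nonpos]; linarith [hmono.2]
    rw [this]
    exact mul_le_mul_of_nonneg_left hmono.1 (hΩB0 E')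
  · filter_upwards [self_mem_ae_restrict (measurableSet_Ioi : MeasurableSet (Ioi (0:ℝ)))]
      with E' hE' x hx
    have hE'0 : (0:ℝ) < E' := hE'
    have hx2 : ε / 2 < x := by
      have := abs_lt.1 (mem_ball_iff_norm.1 hx); linarith [this.1]
    have hd := rho_hasDerivAt f hf hf0 ρ hρdef hρint (E := x + E') (by linarith)
    have hd' : HasDerivAt ρ (deriv ρ (x + E')) (x + E') := hd.differentiableAt.hasDerivAt
    have h3 := (hd'.comp x ((hasDerivAt_id x).add_const E')).const_mul (ΩB E')
    convert h3 using 1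
    · rfl
    · rfl
    · ring
end

section
/- Chapman–Kolmogorov identity for the conditional inverse temperature distribution of a subsystem. Let f : (0,∞) → [0,∞) and Ω_B : (0,∞) → [0,∞) be measurable, ρ(E) := ∫₀^∞ f(β) exp(−βE) dβ finite and strictly positive for E > 0, Z_B(β) := ∫₀^∞ Ω_B(E) exp(−βE) dE, and ρ_A(ε) := ∫₀^∞ Ω_B(E′) ρ(ε + E′) dE′ finite and strictly positive for ε > 0. Then for every β > 0 and every ε > 0: ∫_ε^∞ [ exp(−βE) f(β)/ρ(E) ] · [ Ω_B(E − ε) ρ(E)/ρ_A(ε) ] dE = exp(−βε) · f(β) · Z_B(β) / ρ_A(ε); that is, mixing the conditional temperature densities P(β|E) over the conditional energy density P(E|ε) reproduces exactly the marginal ensemble's conditional temperature density P(β|ε) = exp(−βε) f(β) Z_B(β)/ρ_A(ε). -/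
open MeasureTheory Set ENNReal

/-- **Chapman–Kolmogorov identity for the conditional inverse temperature distribution
of a subsystem.** With ensemble function `ρ(E) = ∫₀^∞ f(β)exp(-βE)dβ` finite and
positive for `E > 0`, partition function `Z_B(β) = ∫₀^∞ Ω_B(E)exp(-βE)dE`, and marginal
ensemble function `ρ_A(ε) = ∫₀^∞ Ω_B(E')ρ(ε+E')dE'` finite and positive for `ε > 0`,
one has for every `β > 0` and `ε > 0`:
`∫_ε^∞ [exp(-βE)f(β)/ρ(E)]·[Ω_B(E-ε)ρ(E)/ρ_A(ε)] dE = exp(-βε)f(β)Z_B(β)/ρ_A(ε)`;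
mixing the conditional temperature densities `P(β|E)` over the conditional energy
density `P(E|ε)` reproduces the marginal ensemble's conditional temperature density. -/
theorem chapman_kolmogorov_conditional_inverse_temperature
    (f ΩB : ℝ → ℝ) (hf : Measurable f) (hΩB : Measurable ΩB)
    (hf0 : ∀ β, 0 ≤ f β) (hΩB0 : ∀ E, 0 ≤ ΩB E)
    (ρ : ℝ → ℝ)
    (hρdef : ∀ E, ρ E = ∫ β in Ioi (0:ℝ), f β * Real.exp (-β * E))
    (hρint : ∀ E > (0:ℝ),
      IntegrableOn (fun β => f β * Real.exp (-β * E)) (Ioi (0:ℝ)))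
    (hρpos : ∀ E > (0:ℝ), 0 < ρ E)
    (ZB : ℝ → ℝ≥0∞)
    (hZB : ∀ β, ZB β = ∫⁻ E in Ioi (0:ℝ), ENNReal.ofReal (ΩB E * Real.exp (-β * E)))
    (ρA : ℝ → ℝ)
    (hρAdef : ∀ ε, ρA ε = ∫ E' in Ioi (0:ℝ), ΩB E' * ρ (ε + E'))
    (hρAint : ∀ ε > (0:ℝ),
      IntegrableOn (fun E' => ΩB E' * ρ (ε + E')) (Ioi (0:ℝ)))
    (hρApos : ∀ ε > (0:ℝ), 0 < ρA ε) :
    ∀ β > (0:ℝ), ∀ ε > (0:ℝ),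
      ∫⁻ E in Ioi ε,
        ENNReal.ofReal (Real.exp (-β * E) * f β / ρ E) *
          ENNReal.ofReal (ΩB (E - ε) * ρ E / ρA ε)
      = ENNReal.ofReal (Real.exp (-β * ε) * f β) * ZB β / ENNReal.ofReal (ρA ε) := by
  intro β hβ ε hε
  have hρA := hρApos ε hε
  -- Pointwise rewrite of the integrand on `Ioi ε`.
  have hcong : ∀ E ∈ Ioi ε,
      ENNReal.ofReal (Real.exp (-β * E) * f β / ρ E) *
        ENNReal.ofReal (ΩB (E - ε) * ρ E / ρA ε)
      = ENNReal.ofReal (Real.exp (-β * ε) * f β) *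
          ENNReal.ofReal (ΩB (E - ε) * Real.exp (-β * (E - ε))) / ENNReal.ofReal (ρA ε) := by
    intro E hE
    have hEε : ε < E := hE
    have hE0 : 0 < E := hε.trans hEε
    have hρE := hρpos E hE0
    have hexp : Real.exp (-β * E) = Real.exp (-β * ε) * Real.exp (-β * (E - ε)) := by
      rw [← Real.exp_add]; ring_nf
    have h1 : Real.exp (-β * E) * f β / ρ E * (ΩB (E - ε) * ρ E / ρA ε)
        = Real.exp (-β * ε) * f β * (ΩB (E - ε) * Real.exp (-β * (E - ε))) / ρA ε := by
      rw [hexp]; field_simp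
    have ha : (0:ℝ) ≤ Real.exp (-β * E) * f β / ρ E :=
      div_nonneg (mul_nonneg (Real.exp_pos _).le (hf0 β)) hρE.le
    have hb : (0:ℝ) ≤ Real.exp (-β * ε) * f β :=
      mul_nonneg (Real.exp_pos _).le (hf0 β)
    rw [← ENNReal.ofReal_mul ha, h1,
      ENNReal.ofReal_div_of_pos hρA,
      ENNReal.ofReal_mul hb]
  rw [setLIntegral_congr_fun measurableSet_Ioi hcong]
  have hmeas : Measurable fun E : ℝ =>
      ENNReal.ofReal (Real.exp (-β * ε) * f β) *
        ENNReal.ofReal (ΩB E * Real.exp (-β * E)) / ENNReal.ofReal (ρA ε) := by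
    apply Measurable.div _ measurable_const
    exact (measurable_const.mul ((hΩB.mul ((measurable_id.const_mul (-β)).exp)).ennreal_ofReal))
  -- Change of variables E ↦ E' + ε.
  have hmp : MeasurePreserving (fun x : ℝ => x + ε) volume volume :=
    measurePreserving_add_right volume ε
  have hpre : (fun x : ℝ => x + ε) ⁻¹' Ioi ε = Ioi (0 : ℝ) := by
    ext x; simp [lt_add_iff_pos_left]
  have hshift := hmp.setLIntegral_comp_preimage_emb
    (measurableEmbedding_addRight ε)
    (fun E => ENNReal.ofReal (Real.exp (-β * ε) * f β) *
        ENNReal.ofReal (ΩB (E - ε) * Real.exp (-β * (E - ε))) / ENNReal.ofReal (ρA ε))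
    (Ioi ε)
  rw [hpre] at hshift
  simp only [add_sub_cancel_right] at hshift
  rw [← hshift]
  rw [hZB]
  simp only [div_eq_mul_inv]
  rw [lintegral_mul_const' _ _
      (ENNReal.inv_ne_top.2 (ENNReal.ofReal_pos.2 hρA).ne'),
    lintegral_const_mul _
      (by fun_prop : Measurable fun E : ℝ => ENNReal.ofReal (ΩB E * Real.exp (-β * E)))]
end

section
/- Gamma mixture of Maxwellians yields the kappa distribution. Let u > 0, β_S > 0, m > 0 and v ∈ ℝ³. Then ∫₀^∞ [ 1/(u β_S Γ(1/u)) · exp(−β/(u β_S)) · (β/(u β_S))^{1/u − 1} ] · (mβ/(2π))^{3/2} · exp(−β m |v|²/2) dβ = (m u β_S/(2π))^{3/2} · ( Γ(3/2 + 1/u) / Γ(1/u) ) · [ 1 + u β_S · m |v|²/2 ]^{−(1/u + 3/2)}. -/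
open MeasureTheory Set

/-- **Gamma mixture of Maxwellians yields the kappa distribution.** For `u > 0`,
`β_S > 0`, `m > 0` and `v ∈ ℝ³`, integrating the Maxwellian velocity density
`(mβ/(2π))^{3/2} exp(-β m|v|²/2)` against the gamma inverse temperature density
`(1/(uβ_S Γ(1/u))) exp(-β/(uβ_S)) (β/(uβ_S))^{1/u-1}` yields the kappa distribution
`(muβ_S/(2π))^{3/2} (Γ(3/2+1/u)/Γ(1/u)) [1 + uβ_S m|v|²/2]^{-(1/u+3/2)}`. -/
theorem gamma_mixture_of_maxwellians_is_kappa
    (u βS m : ℝ) (hu : 0 < u) (hβS : 0 < βS) (hm : 0 < m)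
    (v : EuclideanSpace ℝ (Fin 3)) :
    ∫ β in Ioi (0:ℝ),
      (1 / (u * βS * Real.Gamma (1 / u)) * Real.exp (-β / (u * βS))
          * (β / (u * βS)) ^ (1 / u - 1))
        * ((m * β / (2 * Real.pi)) ^ ((3:ℝ) / 2)
          * Real.exp (-β * m * ‖v‖ ^ 2 / 2))
    = (m * u * βS / (2 * Real.pi)) ^ ((3:ℝ) / 2)
        * (Real.Gamma (3 / 2 + 1 / u) / Real.Gamma (1 / u))
        * (1 + u * βS * m * ‖v‖ ^ 2 / 2) ^ (-(1 / u + 3 / 2)) := by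
  have hπ := Real.pi_pos
  have hc : (0:ℝ) < u * βS := by positivity
  set c : ℝ := u * βS with hcdef
  set w : ℝ := m * ‖v‖ ^ 2 / 2 with hwdef
  have hw : 0 ≤ w := by positivity
  set s : ℝ := 1 / u + 3 / 2 with hs
  set r : ℝ := 1 / c + w with hrdef
  have hr0 : 0 < r := by positivity
  have hs0 : 0 < s := by positivity
  set K : ℝ := 1 / (c * Real.Gamma (1 / u)) * (m / (2 * Real.pi)) ^ ((3:ℝ)/2)
      / c ^ (1 / u - 1) with hK
  have hmain : (∫ β in Ioi (0:ℝ),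
      (1 / (u * βS * Real.Gamma (1 / u)) * Real.exp (-β / (u * βS))
          * (β / (u * βS)) ^ (1 / u - 1))
        * ((m * β / (2 * Real.pi)) ^ ((3:ℝ) / 2)
          * Real.exp (-β * m * ‖v‖ ^ 2 / 2)))
      = ∫ β in Ioi (0:ℝ), K * (β ^ (s - 1) * Real.exp (-(r * β))) := by
    refine setIntegral_congr_fun measurableSet_Ioi (fun β hβ => ?_)
    have hβ0 : 0 < β := hβ
    have e1 : β ^ (1/u - 1) * β ^ ((3:ℝ)/2) = β ^ (s - 1) := by
      rw [← Real.rpow_add hβ0]; congr 1; rw [hs]; ring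
    have e2 : Real.exp (-β / c) * Real.exp (-β * m * ‖v‖ ^ 2 / 2)
        = Real.exp (-(r * β)) := by
      rw [← Real.exp_add]; congr 1; rw [hrdef, hwdef]; field_simp; ring
    rw [Real.div_rpow hβ0.le hc.le,
      show m * β / (2 * Real.pi) = m / (2 * Real.pi) * β by ring,
      Real.mul_rpow (by positivity) hβ0.le]
    rw [hK, ← e1, ← e2]
    ring
  rw [hmain, integral_const_mul, Real.integral_rpow_mul_exp_neg_mul_Ioi hs0 hr0]
  have h1r : 1 / r = c / (1 + c * w) := by
    rw [hrdef, div_eq_div_iff (by positivity) (by positivity)]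
    field_simp
  have h1cw : 0 < 1 + c * w := by positivity
  rw [h1r, Real.div_rpow hc.le h1cw.le, hK]
  have hcs : c ^ s / (c * c ^ (1/u - 1)) = c ^ ((3:ℝ)/2) := by
    rw [show (c : ℝ) * c ^ (1/u-1) = c ^ (1:ℝ) * c ^ (1/u-1) by rw [Real.rpow_one],
      ← Real.rpow_add hc, ← Real.rpow_sub hc]
    congr 1; rw [hs]; ring
  have hmc : (m * u * βS / (2 * Real.pi)) ^ ((3:ℝ)/2)
      = (m / (2 * Real.pi)) ^ ((3:ℝ)/2) * c ^ ((3:ℝ)/2) := by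
    rw [← Real.mul_rpow (by positivity) hc.le]; congr 1; rw [hcdef]; ring
  have hgs : Real.Gamma (3/2 + 1/u) = Real.Gamma s := by rw [hs, add_comm]
  have hex : (1 + u * βS * m * ‖v‖ ^ 2 / 2 : ℝ) = 1 + c * w := by
    rw [hcdef, hwdef]; ring
  have hneg : -(1/u + 3/2 : ℝ) = -s := by rw [hs]
  have hΓ1 : (0:ℝ) < Real.Gamma (1 / u) := Real.Gamma_pos_of_pos (by positivity)
  have hp1 : (0:ℝ) < (1 + c * w) ^ s := Real.rpow_pos_of_pos h1cw _
  have hp2 : (0:ℝ) < c ^ (1 / u - 1) := Real.rpow_pos_of_pos hc _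
  rw [hmc, hgs, hex, hneg, Real.rpow_neg h1cw.le]
  calc 1 / (c * Real.Gamma (1 / u)) * (m / (2 * Real.pi)) ^ ((3:ℝ) / 2) / c ^ (1 / u - 1) *
      (c ^ s / (1 + c * w) ^ s * Real.Gamma s)
      = (c ^ s / (c * c ^ (1 / u - 1))) * ((m / (2 * Real.pi)) ^ ((3:ℝ) / 2)
          * (Real.Gamma s / Real.Gamma (1 / u)) * ((1 + c * w) ^ s)⁻¹) := by
        field_simp
    _ = (m / (2 * Real.pi)) ^ ((3:ℝ) / 2) * c ^ ((3:ℝ) / 2)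
          * (Real.Gamma s / Real.Gamma (1 / u)) * ((1 + c * w) ^ s)⁻¹ := by
        rw [hcs]; ring
end

section
/- Closed form of the spatial distribution in a constant electric field under gamma superstatistics. Let u > 0, β_S > 0, E₀ > 0, L > 0, q ∈ ℝ with q ≠ 0, and x ∈ [−L/2, L/2]; set R := u β_S E₀ L |q|. Then (|q| E₀ / (2 L² Γ(1/u))) · ∫₀^∞ exp( −β/(u β_S) + β q E₀ x ) · (β/(u β_S))^{1/u} / sinh( |q| β E₀ L / 2 ) dβ = (1/(u L³ R^{1/u})) · ζ( 1/u + 1, 1/R − sgn(q)·x/L + 1/2 ), where ζ(s,a) is the Hurwitz zeta function and sgn(q) is the sign of q. (The integral converges since 1/(uβ_S) − qE₀x + |q|E₀L/2 ≥ 1/(uβ_S) > 0 for |x| ≤ L/2, and the second Hurwitz argument is positive.) -/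
open MeasureTheory Set

/-- The Hurwitz zeta function `ζ(s, a) = ∑_{n=0}^∞ (n + a)^{-s}`, for real `s > 1`
and `a > 0`. -/
noncomputable def hurwitzZetaReal (s a : ℝ) : ℝ := ∑' n : ℕ, ((n : ℝ) + a) ^ (-s)

private lemma aux_eqOn {p r ν : ℝ} (hν : 0 < ν) :
    EqOn (fun β : ℝ => 2 * Real.exp (-(r * β)) * (β / ν) ^ p)
      (fun β : ℝ => (2 * (1 / ν) ^ p) * (β ^ ((p + 1) - 1) * Real.exp (-(r * β)))) (Ioi 0) := by
  intro β hβ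
  rw [mem_Ioi] at hβ
  simp only
  rw [Real.div_rpow hβ.le hν.le, Real.div_rpow zero_le_one hν.le, Real.one_rpow,
    add_sub_cancel_right]
  ring

private lemma aux_integrable {p r ν : ℝ} (hp : 0 < p) (hr : 0 < r) (hν : 0 < ν) :
    IntegrableOn (fun β : ℝ => 2 * Real.exp (-(r * β)) * (β / ν) ^ p) (Ioi 0) := by
  have h := integrableOn_rpow_mul_exp_neg_mul_rpow (p := 1) (s := p) (by linarith) zero_lt_one hr
  simp only [Real.rpow_one] at h
  have h2 : IntegrableOn
      (fun β : ℝ => (2 * (1 / ν) ^ p) * (β ^ ((p + 1) - 1) * Real.exp (-(r * β)))) (Ioi 0) := by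
    simp only [add_sub_cancel_right]
    exact MeasureTheory.IntegrableOn.congr_fun (h.const_mul (2 * (1 / ν) ^ p))
      (fun β _ => by rw [neg_mul]) measurableSet_Ioi
  exact (integrableOn_congr_fun (aux_eqOn hν) measurableSet_Ioi).mpr h2

private lemma aux_integral {p r ν : ℝ} (hp : 0 < p) (hr : 0 < r) (hν : 0 < ν) :
    ∫ β in Ioi (0:ℝ), 2 * Real.exp (-(r * β)) * (β / ν) ^ p
      = 2 * (1 / ν) ^ p * ((1 / r) ^ (p + 1) * Real.Gamma (p + 1)) := by
  rw [setIntegral_congr_fun measurableSet_Ioi (aux_eqOn hν), integral_const_mul,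
    Real.integral_rpow_mul_exp_neg_mul_Ioi (by linarith : (0:ℝ) < p + 1) hr]

set_option maxHeartbeats 2000000 in
/-- **Closed form of the spatial distribution in a constant electric field under gamma
superstatistics.** For `u > 0`, `β_S > 0`, `E₀ > 0`, `L > 0`, `q ≠ 0`,
`x ∈ [-L/2, L/2]` and `R = uβ_S E₀ L |q|`,
`(|q|E₀/(2L²Γ(1/u))) ∫₀^∞ exp(-β/(uβ_S) + βqE₀x) (β/(uβ_S))^{1/u} / sinh(|q|βE₀L/2) dβ
  = (1/(uL³R^{1/u})) ζ(1/u + 1, 1/R - sgn(q)x/L + 1/2)`. -/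
theorem spatial_distribution_constant_field_gamma_superstatistics
    (u βS E₀ L q x : ℝ) (hu : 0 < u) (hβS : 0 < βS) (hE₀ : 0 < E₀) (hL : 0 < L)
    (hq : q ≠ 0) (hx : x ∈ Icc (-(L / 2)) (L / 2))
    (R : ℝ) (hR : R = u * βS * E₀ * L * |q|) :
    |q| * E₀ / (2 * L ^ 2 * Real.Gamma (1 / u))
        * ∫ β in Ioi (0:ℝ),
            Real.exp (-β / (u * βS) + β * q * E₀ * x) * (β / (u * βS)) ^ (1 / u)
              / Real.sinh (|q| * β * E₀ * L / 2)
    = 1 / (u * L ^ 3 * R ^ (1 / u))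
        * hurwitzZetaReal (1 / u + 1) (1 / R - Real.sign q * x / L + 1 / 2) := by
  obtain ⟨hx1, hx2⟩ := hx
  have habs : 0 < |q| := abs_pos.mpr hq
  set ν : ℝ := u * βS with hν_def
  have hν : 0 < ν := by positivity
  set k : ℝ := |q| * E₀ * L / 2 with hk_def
  have hk : 0 < k := by positivity
  set p : ℝ := 1 / u with hp_def
  have hp : 0 < p := by positivity
  have hsq : Real.sign q * |q| = q := by
    rcases hq.lt_or_gt with h | h
    · rw [Real.sign_of_neg h, abs_of_neg h]; ring
    · rw [Real.sign_of_pos h, abs_of_pos h]; ring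
  have hR0 : 0 < R := by rw [hR]; positivity
  set a : ℝ := 1 / R - Real.sign q * x / L + 1 / 2 with ha_def
  have ha : 0 < a := by
    have hsx : Real.sign q * x ≤ L / 2 := by
      rcases hq.lt_or_gt with h | h
      · rw [Real.sign_of_neg h]; linarith
      · rw [Real.sign_of_pos h]; linarith
    have h1 : Real.sign q * x / L ≤ 1 / 2 := by
      rw [div_le_iff₀ hL]; linarith
    have h2 : 0 < 1 / R := by positivity
    rw [ha_def]; linarith
  set c : ℕ → ℝ := fun n => 2 * k * ((n : ℝ) + a) with hc_def
  have hcpos : ∀ n, 0 < c n := by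
    intro n
    have hna : (0:ℝ) < (n : ℝ) + a := by
      have := Nat.cast_nonneg (α := ℝ) n; linarith
    exact mul_pos (by positivity) hna
  have hRν : R = ν * (2 * k) := by rw [hR, hk_def, hν_def]; ring
  have hc0 : 2 * k * a = 1 / ν - q * E₀ * x + k := by
    have e1 : 2 * k * (1 / R) = 1 / ν := by
      rw [hRν]; field_simp
    have e2 : 2 * k * (Real.sign q * x / L) = q * E₀ * x := by
      have h' : 2 * k * (Real.sign q * x / L) = (Real.sign q * |q|) * E₀ * x * (L / L) := by
        rw [hk_def]; ring
      rw [h', hsq, div_self hL.ne']; ring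
    have e3 : 2 * k * a = 2 * k * (1 / R) - 2 * k * (Real.sign q * x / L) + 2 * k * (1 / 2) := by
      rw [ha_def]; ring
    rw [e3, e1, e2]; ring
  -- pointwise series expansion
  have hpt : EqOn
      (fun β : ℝ => Real.exp (-β / ν + β * q * E₀ * x) * (β / ν) ^ p
        / Real.sinh (|q| * β * E₀ * L / 2))
      (fun β : ℝ => ∑' n : ℕ, 2 * Real.exp (-(c n * β)) * (β / ν) ^ p) (Ioi 0) := by
    intro β hβ
    rw [mem_Ioi] at hβ
    have hkβ : |q| * β * E₀ * L / 2 = k * β := by rw [hk_def]; ring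
    simp only
    rw [hkβ]
    have hterm : ∀ n : ℕ, 2 * Real.exp (-(c n * β)) * (β / ν) ^ p
        = (2 * Real.exp (-(2 * k * a * β)) * (β / ν) ^ p) * (Real.exp (-(2 * k * β))) ^ n := by
      intro n
      have he : -(c n * β) = -(2 * k * a * β) + (n : ℝ) * (-(2 * k * β)) := by
        simp only [hc_def]; ring
      rw [he, Real.exp_add, Real.exp_nat_mul]; ring
    rw [tsum_congr hterm, tsum_mul_left,
      tsum_geometric_of_lt_one (Real.exp_nonneg _)
        (Real.exp_lt_one_iff.mpr (neg_neg_iff_pos.mpr (by positivity)))]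
    rw [hc0]
    have r1 : Real.exp (-((1 / ν - q * E₀ * x + k) * β))
        = Real.exp (-β / ν + β * q * E₀ * x) * (Real.exp (k * β))⁻¹ := by
      rw [← Real.exp_neg, ← Real.exp_add]; congr 1; ring
    have r2 : Real.exp (-(2 * k * β)) = (Real.exp (k * β))⁻¹ * (Real.exp (k * β))⁻¹ := by
      rw [← Real.exp_neg, ← Real.exp_add]; congr 1; ring
    have hE : (0:ℝ) < Real.exp (k * β) := Real.exp_pos _
    have hE1 : 1 < Real.exp (k * β) := Real.one_lt_exp_iff.mpr (by positivity)
    have hEinv : (Real.exp (k * β))⁻¹ < 1 := inv_lt_one_of_one_lt₀ hE1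
    have hEinv0 : 0 < (Real.exp (k * β))⁻¹ := by positivity
    have hs : 0 < Real.sinh (k * β) := Real.sinh_pos_iff.mpr (by positivity)
    have hgne : (0:ℝ) < 1 - (Real.exp (k * β))⁻¹ * (Real.exp (k * β))⁻¹ := by nlinarith
    rw [r1, r2, div_eq_iff hs.ne', Real.sinh_eq, Real.exp_neg]
    have hE2 : Real.exp (k * β) ^ 2 - 1 ≠ 0 := by nlinarith
    have h3 : 1 - (Real.exp (k * β))⁻¹ * (Real.exp (k * β))⁻¹
        = (Real.exp (k * β) ^ 2 - 1) / (Real.exp (k * β)) ^ 2 := by field_simp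
    rw [h3]
    field_simp [hE2]
    ring_nf
    have hE2' : -1 + Real.exp (β * k) ^ 2 ≠ 0 := by
      rw [mul_comm β k]; intro h; apply hE2; linarith
    rw [show Real.exp (β * k) ^ 2 * (-1 + Real.exp (β * k) ^ 2)⁻¹ - (-1 + Real.exp (β * k) ^ 2)⁻¹
        = (-1 + Real.exp (β * k) ^ 2) * (-1 + Real.exp (β * k) ^ 2)⁻¹ by ring,
      mul_inv_cancel₀ hE2']
  have hmeas : ∀ n : ℕ, AEStronglyMeasurable
      (fun β : ℝ => 2 * Real.exp (-(c n * β)) * (β / ν) ^ p) (volume.restrict (Ioi 0)) := by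
    intro n
    exact ((continuous_const.mul (Real.continuous_exp.comp
      ((continuous_const.mul continuous_id).neg))).mul
      ((Real.continuous_rpow_const hp.le).comp (continuous_id.div_const ν))).aestronglyMeasurable
  set C : ℝ := 2 * (1 / ν) ^ p * ((1 / (2 * k)) ^ (p + 1) * Real.Gamma (p + 1)) with hC_def
  have hC : 0 < C := by
    have hG := Real.Gamma_pos_of_pos (by linarith : (0:ℝ) < p + 1)
    positivity
  have hval : ∀ n : ℕ, ∫ β in Ioi (0:ℝ), 2 * Real.exp (-(c n * β)) * (β / ν) ^ p
      = C * ((n : ℝ) + a) ^ (-(p + 1)) := by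
    intro n
    have hna : (0:ℝ) < (n : ℝ) + a := by
      have := Nat.cast_nonneg (α := ℝ) n; linarith
    rw [aux_integral hp (hcpos n) hν]
    have h1 : (1 / c n) = (1 / (2 * k)) * (1 / ((n : ℝ) + a)) := by
      rw [hc_def]; field_simp
    rw [h1, Real.mul_rpow (one_div_nonneg.mpr (by linarith)) (one_div_nonneg.mpr hna.le),
      one_div ((n:ℝ) + a),
      Real.inv_rpow hna.le, ← Real.rpow_neg hna.le, hC_def]
    ring
  have hnn : ∀ n : ℕ, (0:ℝ) ≤ C * ((n : ℝ) + a) ^ (-(p + 1)) := by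
    intro n
    have hna : (0:ℝ) < (n : ℝ) + a := by
      have := Nat.cast_nonneg (α := ℝ) n; linarith
    exact le_of_lt (mul_pos hC (Real.rpow_pos_of_pos hna _))
  have hsum : Summable (fun n : ℕ => ((n : ℝ) + a) ^ (-(p + 1))) := by
    have h := (Real.summable_one_div_nat_add_rpow a (p + 1)).mpr (by linarith)
    refine h.congr fun n => ?_
    have hna : (0:ℝ) < (n : ℝ) + a := by
      have := Nat.cast_nonneg (α := ℝ) n; linarith
    rw [abs_of_pos hna, Real.rpow_neg hna.le, one_div]
  have hsumC : Summable (fun n : ℕ => C * ((n : ℝ) + a) ^ (-(p + 1))) := hsum.mul_left C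
  have hlint : ∀ n : ℕ,
      ∫⁻ β, ‖2 * Real.exp (-(c n * β)) * (β / ν) ^ p‖₊ ∂(volume.restrict (Ioi 0))
        = ENNReal.ofReal (C * ((n : ℝ) + a) ^ (-(p + 1))) := by
    intro n
    have hnnae : 0 ≤ᵐ[volume.restrict (Ioi 0)]
        fun β : ℝ => 2 * Real.exp (-(c n * β)) * (β / ν) ^ p := by
      filter_upwards [ae_restrict_mem measurableSet_Ioi] with β hβ
      rw [mem_Ioi] at hβ
      have hw : (0:ℝ) ≤ (β / ν) ^ p := Real.rpow_nonneg (by positivity) p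
      positivity
    calc ∫⁻ β, ‖2 * Real.exp (-(c n * β)) * (β / ν) ^ p‖₊ ∂(volume.restrict (Ioi 0))
        = ∫⁻ β, ENNReal.ofReal (2 * Real.exp (-(c n * β)) * (β / ν) ^ p)
            ∂(volume.restrict (Ioi 0)) := by
          apply lintegral_congr_ae
          filter_upwards [hnnae] with β hβ
          exact Real.enorm_eq_ofReal hβ
      _ = ENNReal.ofReal (∫ β, 2 * Real.exp (-(c n * β)) * (β / ν) ^ p
            ∂(volume.restrict (Ioi 0))) :=
          (ofReal_integral_eq_lintegral_ofReal (aux_integrable hp (hcpos n) hν) hnnae).symm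
      _ = ENNReal.ofReal (C * ((n : ℝ) + a) ^ (-(p + 1))) := by rw [hval n]
  have hfin : ∑' n : ℕ,
      ∫⁻ β, ‖2 * Real.exp (-(c n * β)) * (β / ν) ^ p‖₊ ∂(volume.restrict (Ioi 0)) ≠ ⊤ := by
    rw [tsum_congr hlint, ← ENNReal.ofReal_tsum_of_nonneg hnn hsumC]
    exact ENNReal.ofReal_ne_top
  rw [setIntegral_congr_fun measurableSet_Ioi hpt, integral_tsum hmeas hfin,
    tsum_congr hval, tsum_mul_left]
  have hζ : hurwitzZetaReal (p + 1) a = ∑' n : ℕ, ((n : ℝ) + a) ^ (-(p + 1)) := rfl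
  rw [← hζ, ← mul_assoc]
  congr 1
  -- scalar identity
  have hG : (0:ℝ) < Real.Gamma p := Real.Gamma_pos_of_pos hp
  have h2k : (0:ℝ) < 1 / (2 * k) := by positivity
  have hmul : (1 / ν) ^ p * (1 / (2 * k)) ^ p = 1 / R ^ p := by
    rw [← Real.mul_rpow (by positivity) (by positivity)]
    rw [show (1 / ν) * (1 / (2 * k)) = 1 / R by rw [hRν]; field_simp]
    rw [one_div, Real.inv_rpow hR0.le, one_div]
  have hRp : (0:ℝ) < R ^ p := Real.rpow_pos_of_pos hR0 p
  rw [hC_def, Real.Gamma_add_one hp.ne', Real.rpow_add h2k p 1, Real.rpow_one]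
  have step : |q| * E₀ / (2 * L ^ 2 * Real.Gamma p)
      * (2 * (1 / ν) ^ p * ((1 / (2 * k)) ^ p * (1 / (2 * k)) * (p * Real.Gamma p)))
      = ((1 / ν) ^ p * (1 / (2 * k)) ^ p)
        * (|q| * E₀ * (1 / (2 * k)) * p * (2 * Real.Gamma p) / (2 * L ^ 2 * Real.Gamma p)) := by
    ring
  rw [step, hmul]
  rw [show |q| * E₀ * (1 / (2 * k)) * p * (2 * Real.Gamma p) / (2 * L ^ 2 * Real.Gamma p)
      = 1 / (u * L ^ 3) by
    rw [hk_def, hp_def]; field_simp]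
  rw [div_mul_div_comm, one_mul]
  congr 1
  ring
end

section
/- Canonical limit of the superstatistical spatial distribution. For every real r > 0 and every real a, lim_{s → ∞} s · (s/r)^s · ζ( s + 1, s/r + a ) = r · exp(−a r) / (1 − exp(−r)), where ζ is the Hurwitz zeta function. (Equivalently, writing s = 1/u, R = r·u and a = 1/2 − sgn(q)·x/L with r = β E₀ L |q|, the spatial distribution (1/(u L³ R^{1/u})) ζ(1/u+1, 1/R + a) converges as u → 0⁺, β_S → β, to the canonical distribution (|q|βE₀/(2L²)) · exp(βqE₀x)/sinh(|q|βE₀L/2).) -/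
set_option maxHeartbeats 1000000

open MeasureTheory Set

open Filter Real

section Aux

variable {r a : ℝ}

/-- Basic estimates valid for large `s`. -/
lemma aux_basic (hr : 0 < r) (s : ℝ) (hs : 2 + 2 * (|a| + 1) * (r + 1) ≤ s) :
    2 ≤ s ∧ ∀ n : ℕ, 1 / 2 ≤ 1 + ((n : ℝ) + a) * r / s := by
  have habs : 0 ≤ |a| := abs_nonneg a
  have h2 : 2 ≤ s := by nlinarith
  refine ⟨h2, fun n => ?_⟩
  have hs0 : (0 : ℝ) < s := by linarith
  have hn : (0 : ℝ) ≤ (n : ℝ) := n.cast_nonneg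
  have hcr : -(s / 2) ≤ ((n : ℝ) + a) * r := by
    nlinarith [neg_abs_le a, mul_nonneg hn hr.le,
      mul_nonneg (by linarith [neg_abs_le a] : (0:ℝ) ≤ a + |a|) hr.le]
  have hdiv : -(s / 2) / s ≤ ((n : ℝ) + a) * r / s :=
    div_le_div_of_nonneg_right hcr hs0.le
  have he : -(s / 2) / s = -(1 / 2) := by field_simp
  linarith

/-- For large `s`, the rescaled Hurwitz zeta equals the tsum of the normalized terms. -/
lemma aux_rewrite (hr : 0 < r) (s : ℝ) (hs : 2 + 2 * (|a| + 1) * (r + 1) ≤ s) :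
    (∑' n : ℕ, r * (1 + ((n : ℝ) + a) * r / s) ^ (-(s + 1)))
      = s * (s / r) ^ s * hurwitzZetaReal (s + 1) (s / r + a) := by
  obtain ⟨h2, hB⟩ := aux_basic hr s hs
  have hs0 : (0 : ℝ) < s := by linarith
  have hsr : (0 : ℝ) < s / r := by positivity
  unfold hurwitzZetaReal
  rw [← tsum_mul_left]
  refine tsum_congr fun n => ?_
  have hBn := hB n
  have hfac : (n : ℝ) + (s / r + a) = (s / r) * (1 + ((n : ℝ) + a) * r / s) := by
    field_simp
    ring
  rw [hfac, Real.mul_rpow hsr.le (by linarith)]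
  have e2 : (s / r) ^ s * (s / r) ^ (-(s + 1)) = (s / r) ^ (-1 : ℝ) := by
    rw [← Real.rpow_add hsr, show s + -(s + 1) = (-1 : ℝ) by ring]
  have e3 : s * (s / r) ^ (-1 : ℝ) = r := by
    rw [Real.rpow_neg_one]
    field_simp
  calc r * (1 + ((n : ℝ) + a) * r / s) ^ (-(s + 1))
      = s * ((s / r) ^ s * (s / r) ^ (-(s + 1))) * (1 + ((n : ℝ) + a) * r / s) ^ (-(s + 1)) := by
        rw [e2, e3]
    _ = s * (s / r) ^ s * ((s / r) ^ (-(s + 1)) * (1 + ((n : ℝ) + a) * r / s) ^ (-(s + 1))) := by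
        ring

/-- Pointwise limit of each normalized term. -/
lemma aux_lim (hr : 0 < r) (n : ℕ) :
    Filter.Tendsto (fun s : ℝ => r * (1 + ((n : ℝ) + a) * r / s) ^ (-(s + 1)))
      Filter.atTop (nhds (r * Real.exp (-(((n : ℝ) + a) * r)))) := by
  set u : ℝ := ((n : ℝ) + a) * r with hu
  have h1 : Filter.Tendsto (fun s : ℝ => (1 + u / s) ^ s) Filter.atTop (nhds (Real.exp u)) :=
    tendsto_one_add_div_rpow_exp u
  have h2 : Filter.Tendsto (fun s : ℝ => 1 + u / s) Filter.atTop (nhds 1) := by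
    simpa [div_eq_mul_inv] using (tendsto_inv_atTop_zero.const_mul u).const_add 1
  have h3 : Filter.Tendsto (fun s : ℝ => ((1 + u / s) ^ s * (1 + u / s))⁻¹)
      Filter.atTop (nhds (Real.exp u * 1)⁻¹) :=
    (h1.mul h2).inv₀ (by simp [Real.exp_ne_zero])
  have h4 : Filter.Tendsto (fun s : ℝ => r * ((1 + u / s) ^ s * (1 + u / s))⁻¹)
      Filter.atTop (nhds (r * Real.exp (-u))) := by
    simpa [Real.exp_neg] using h3.const_mul r
  refine h4.congr' ?_
  filter_upwards [eventually_ge_atTop (2 + 2 * (|a| + 1) * (r + 1))] with s hs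
  obtain ⟨h2', hB⟩ := aux_basic hr s hs
  have hB0 : (0 : ℝ) < 1 + u / s := by rw [hu]; linarith [hB n]
  congr 1
  rw [Real.rpow_neg hB0.le, Real.rpow_add hB0, Real.rpow_one]

end Aux

/-- **Canonical limit of the superstatistical spatial distribution.** For every real
`r > 0` and every real `a`,
`lim_{s → ∞} s (s/r)^s ζ(s+1, s/r + a) = r exp(-ar)/(1 - exp(-r))`;
the gamma-superstatistical spatial distribution of a charged particle in a constant
electric field reduces, in the limit `u → 0⁺` (`s = 1/u → ∞`), to the canonical
(Boltzmann) spatial distribution. -/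
theorem canonical_limit_of_spatial_distribution (r : ℝ) (hr : 0 < r) (a : ℝ) :
    Filter.Tendsto
      (fun s : ℝ => s * (s / r) ^ s * hurwitzZetaReal (s + 1) (s / r + a))
      Filter.atTop
      (nhds (r * Real.exp (-a * r) / (1 - Real.exp (-r)))) := by
  have habs : 0 ≤ |a| := abs_nonneg a
  have hr2 : (0 : ℝ) < r / 2 := by linarith
  set K : ℝ := r * Real.exp (4 * (|a| * r)) with hK
  set M : ℝ := 2 * |a| + 2 + 4 / r with hM
  have hK0 : 0 < K := mul_pos hr (Real.exp_pos _)
  have hM4 : 4 / r ≤ M := by simp only [hM]; linarith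
  have hM0 : 0 < M := lt_of_lt_of_le (by positivity) hM4
  set g : ℕ → ℝ := fun n => K / (1 + max ((n : ℝ) + a) 0 * (r / 2)) ^ 2 with hg
  have hmax0 : ∀ n : ℕ, (0 : ℝ) ≤ max ((n : ℝ) + a) 0 := fun n => le_max_right _ _
  have hDpos : ∀ n : ℕ, (0 : ℝ) < 1 + max ((n : ℝ) + a) 0 * (r / 2) := fun n => by
    have := mul_nonneg (hmax0 n) hr2.le
    linarith
  have hg0 : ∀ n, 0 ≤ g n := fun n => by
    have := hDpos n
    exact div_nonneg hK0.le (by positivity)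
  -- key inequality for summability of the bound
  have hNM : ∀ n : ℕ, ((n : ℝ) + 1) ≤ M * (1 + max ((n : ℝ) + a) 0 * (r / 2)) := by
    intro n
    have hm0 := hmax0 n
    rcases le_or_gt ((n : ℝ) + 1) M with h | h
    · have hstep := mul_le_mul_of_nonneg_left
        (by linarith [mul_nonneg hm0 hr2.le] :
          (1:ℝ) ≤ 1 + max ((n : ℝ) + a) 0 * (r / 2)) hM0.le
      rw [mul_one] at hstep
      exact h.trans hstep
    · have h4r : 0 < 4 / r := by positivity
      have hn : 2 * |a| + 1 ≤ (n : ℝ) := by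
        simp only [hM] at h; linarith
      have hc : ((n : ℝ) + 1) / 2 ≤ (n : ℝ) + a := by
        nlinarith [neg_abs_le a]
      have hmax : ((n : ℝ) + 1) / 2 ≤ max ((n : ℝ) + a) 0 := le_trans hc (le_max_left _ _)
      have h5 : (4 / r) * (max ((n : ℝ) + a) 0 * (r / 2))
          ≤ M * (1 + max ((n : ℝ) + a) 0 * (r / 2)) := by
        refine mul_le_mul hM4 (by linarith [mul_nonneg hm0 hr2.le]) ?_ hM0.le
        exact mul_nonneg hm0 hr2.le
      have h6 : (4 / r) * (max ((n : ℝ) + a) 0 * (r / 2)) = 2 * max ((n : ℝ) + a) 0 := by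
        field_simp; ring
      rw [h6] at h5
      linarith
  have hsum_g : Summable g := by
    have hbase : Summable (fun n : ℕ => (K * M ^ 2) * (1 / ((n : ℝ) + 1) ^ 2)) := by
      apply Summable.mul_left
      have h0 : Summable (fun n : ℕ => 1 / ((n : ℝ)) ^ 2) :=
        summable_one_div_nat_pow.mpr (by norm_num)
      have h1 := (summable_nat_add_iff 1).mpr h0
      refine h1.congr fun n => ?_
      push_cast
      ring
    refine Summable.of_nonneg_of_le hg0 (fun n => ?_) hbase
    have hD := hDpos n
    have hn1 : (0 : ℝ) < (n : ℝ) + 1 := by positivity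
    have hNMn := hNM n
    have hsq : ((n : ℝ) + 1) ^ 2 ≤ M ^ 2 * (1 + max ((n : ℝ) + a) 0 * (r / 2)) ^ 2 := by
      have hmul := mul_le_mul hNMn hNMn hn1.le (le_trans hn1.le hNMn)
      nlinarith [hmul]
    have hrw : (K * M ^ 2) * (1 / ((n : ℝ) + 1) ^ 2) = (K * M ^ 2) / ((n : ℝ) + 1) ^ 2 := by
      ring
    rw [hg, hrw, div_le_div_iff₀ (by positivity) (by positivity)]
    nlinarith [mul_le_mul_of_nonneg_left hsq hK0.le]
  -- the uniform bound
  have hbound : ∀ᶠ s in Filter.atTop, ∀ n : ℕ,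
      ‖r * (1 + ((n : ℝ) + a) * r / s) ^ (-(s + 1))‖ ≤ g n := by
    filter_upwards [eventually_ge_atTop (2 + 2 * (|a| + 1) * (r + 1))] with s hs n
    obtain ⟨h2, hBall⟩ := aux_basic hr s hs
    have hs0 : (0 : ℝ) < s := by linarith
    have hBhalf : 1 / 2 ≤ 1 + ((n : ℝ) + a) * r / s := hBall n
    have hB0 : (0 : ℝ) < 1 + ((n : ℝ) + a) * r / s := by linarith
    rw [Real.norm_eq_abs,
      abs_of_nonneg (mul_nonneg hr.le (Real.rpow_nonneg hB0.le _))]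
    rcases le_or_gt 0 ((n : ℝ) + a) with hcpos | hcneg
    · -- nonnegative case : Bernoulli
      have hmax : max ((n : ℝ) + a) 0 = (n : ℝ) + a := max_eq_left hcpos
      have h0c : 0 ≤ ((n : ℝ) + a) * r / s :=
        div_nonneg (mul_nonneg hcpos hr.le) hs0.le
      have hB1 : 1 ≤ 1 + ((n : ℝ) + a) * r / s := by linarith
      have hD0c : 0 ≤ ((n : ℝ) + a) * (r / 2) := mul_nonneg hcpos hr2.le
      have hD1 : 1 ≤ 1 + ((n : ℝ) + a) * (r / 2) := by linarith
      have hD0 : (0 : ℝ) < 1 + ((n : ℝ) + a) * (r / 2) := by linarith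
      have step1 : (1 + ((n : ℝ) + a) * r / s) ^ (-(s + 1))
          ≤ (1 + ((n : ℝ) + a) * r / s) ^ (-s) :=
        Real.rpow_le_rpow_of_exponent_le hB1 (by linarith)
      have hber : (1 + ((n : ℝ) + a) * (r / 2)) ^ (2 / s) ≤ 1 + ((n : ℝ) + a) * r / s := by
        have hb := rpow_one_add_le_one_add_mul_self
          (s := ((n : ℝ) + a) * (r / 2)) (by linarith) (p := 2 / s)
          (div_nonneg (by norm_num) hs0.le) (by rw [div_le_one hs0]; linarith)
        have he : 1 + (2 / s) * (((n : ℝ) + a) * (r / 2)) = 1 + ((n : ℝ) + a) * r / s := by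
          field_simp
        rw [he] at hb
        exact hb
      have step2 : (1 + ((n : ℝ) + a) * (r / 2)) ^ (2 : ℝ)
          ≤ (1 + ((n : ℝ) + a) * r / s) ^ s := by
        have h := Real.rpow_le_rpow (Real.rpow_nonneg hD0.le _) hber hs0.le
        rwa [← Real.rpow_mul hD0.le, div_mul_cancel₀ _ hs0.ne'] at h
      have step3 : (1 + ((n : ℝ) + a) * r / s) ^ (-s)
          ≤ ((1 + ((n : ℝ) + a) * (r / 2)) ^ (2 : ℝ))⁻¹ := by
        rw [Real.rpow_neg hB0.le]
        exact inv_anti₀ (Real.rpow_pos_of_pos hD0 _) step2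
      have hD2 : (1 + ((n : ℝ) + a) * (r / 2)) ^ (2 : ℝ)
          = (1 + ((n : ℝ) + a) * (r / 2)) ^ (2 : ℕ) := by
        rw [show ((2 : ℝ)) = ((2 : ℕ) : ℝ) by norm_num, Real.rpow_natCast]
      have hrK : r ≤ K := by
        rw [hK]
        nlinarith [Real.one_le_exp (by positivity : (0:ℝ) ≤ 4 * (|a| * r))]
      have hgn : g n = K / (1 + ((n : ℝ) + a) * (r / 2)) ^ (2 : ℕ) := by
        simp only [hg, hmax]
      rw [hgn]
      have hinv0 : (0:ℝ) ≤ ((1 + ((n : ℝ) + a) * (r / 2)) ^ (2:ℝ))⁻¹ :=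
        inv_nonneg.mpr (Real.rpow_nonneg hD0.le _)
      calc r * (1 + ((n : ℝ) + a) * r / s) ^ (-(s + 1))
          ≤ r * ((1 + ((n : ℝ) + a) * (r / 2)) ^ (2 : ℝ))⁻¹ :=
            mul_le_mul_of_nonneg_left (le_trans step1 step3) hr.le
        _ ≤ K * ((1 + ((n : ℝ) + a) * (r / 2)) ^ (2 : ℝ))⁻¹ :=
            mul_le_mul_of_nonneg_right hrK hinv0
        _ = K / (1 + ((n : ℝ) + a) * (r / 2)) ^ (2 : ℕ) := by rw [hD2]; ring
    · -- negative case : uniformly bounded by K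
      have hmax : max ((n : ℝ) + a) 0 = 0 := max_eq_right hcneg.le
      have hgn : g n = K := by
        simp only [hg, hmax]; norm_num
      rw [hgn]
      have hBinv : (1 + ((n : ℝ) + a) * r / s)⁻¹ ≤ 2 := by
        have h := inv_anti₀ (by norm_num : (0:ℝ) < 1/2) hBhalf
        simpa using h
      have hlog : -Real.log (1 + ((n : ℝ) + a) * r / s)
          ≤ (1 + ((n : ℝ) + a) * r / s)⁻¹ - 1 := by
        have h := Real.log_le_sub_one_of_pos (inv_pos.mpr hB0)
        rwa [Real.log_inv] at h
      have hq0 : 0 ≤ -(((n : ℝ) + a) * r) := by nlinarith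
      have hqle : -(((n : ℝ) + a) * r) ≤ |a| * r := by
        have hca : a ≤ (n : ℝ) + a := by linarith [Nat.cast_nonneg (α := ℝ) n]
        have t2 : -a ≤ |a| := neg_le_abs a
        nlinarith [mul_le_mul_of_nonneg_right
          (by linarith : -((n : ℝ) + a) ≤ |a|) hr.le]
      have h1B : 1 - (1 + ((n : ℝ) + a) * r / s) = -(((n : ℝ) + a) * r) / s := by ring
      have hfe : (1 + ((n : ℝ) + a) * r / s)⁻¹ - 1
          = (1 - (1 + ((n : ℝ) + a) * r / s)) * (1 + ((n : ℝ) + a) * r / s)⁻¹ := by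
        rw [sub_mul, one_mul, mul_inv_cancel₀ hB0.ne']
      have e1 : -Real.log (1 + ((n : ℝ) + a) * r / s) ≤ -(((n : ℝ) + a) * r) / s * 2 := by
        have h1Bpos : 0 ≤ 1 - (1 + ((n : ℝ) + a) * r / s) := by
          rw [h1B]
          exact div_nonneg hq0 hs0.le
        have h' : (1 - (1 + ((n : ℝ) + a) * r / s)) * (1 + ((n : ℝ) + a) * r / s)⁻¹
            ≤ (1 - (1 + ((n : ℝ) + a) * r / s)) * 2 :=
          mul_le_mul_of_nonneg_left hBinv h1Bpos
        calc -Real.log (1 + ((n : ℝ) + a) * r / s)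
            ≤ (1 + ((n : ℝ) + a) * r / s)⁻¹ - 1 := hlog
          _ = (1 - (1 + ((n : ℝ) + a) * r / s)) * (1 + ((n : ℝ) + a) * r / s)⁻¹ := hfe
          _ ≤ (1 - (1 + ((n : ℝ) + a) * r / s)) * 2 := h'
          _ = -(((n : ℝ) + a) * r) / s * 2 := by rw [h1B]
      have e4 : (s + 1) * (-(((n : ℝ) + a) * r) / s * 2) ≤ 4 * (|a| * r) := by
        rw [show (s + 1) * (-(((n : ℝ) + a) * r) / s * 2)
            = (2 * -(((n : ℝ) + a) * r) * (s + 1)) / s by ring,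
          div_le_iff₀ hs0]
        nlinarith [mul_nonneg hq0 (by linarith : (0:ℝ) ≤ s - 1),
          mul_le_mul_of_nonneg_right hqle hs0.le]
      have key : Real.log (1 + ((n : ℝ) + a) * r / s) * (-(s + 1)) ≤ 4 * (|a| * r) := by
        have e3 : (s + 1) * (-Real.log (1 + ((n : ℝ) + a) * r / s))
            ≤ (s + 1) * (-(((n : ℝ) + a) * r) / s * 2) :=
          mul_le_mul_of_nonneg_left e1 (by linarith)
        nlinarith [le_trans e3 e4]
      have hBpow : (1 + ((n : ℝ) + a) * r / s) ^ (-(s + 1)) ≤ Real.exp (4 * (|a| * r)) := by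
        rw [Real.rpow_def_of_pos hB0]
        exact Real.exp_le_exp.mpr key
      rw [hK]
      exact mul_le_mul_of_nonneg_left hBpow hr.le
  -- dominated convergence
  have key : Filter.Tendsto
      (fun s : ℝ => ∑' n : ℕ, r * (1 + ((n : ℝ) + a) * r / s) ^ (-(s + 1)))
      Filter.atTop (nhds (∑' n : ℕ, r * Real.exp (-(((n : ℝ) + a) * r)))) :=
    tendsto_tsum_of_dominated_convergence hsum_g (fun n => aux_lim hr n) hbound
  -- value of the limit tsum
  have hGsum : (∑' n : ℕ, r * Real.exp (-(((n : ℝ) + a) * r)))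
      = r * Real.exp (-a * r) / (1 - Real.exp (-r)) := by
    have h1 : ∀ n : ℕ, r * Real.exp (-(((n : ℝ) + a) * r))
        = (r * Real.exp (-a * r)) * Real.exp (-r) ^ n := by
      intro n
      rw [← Real.exp_nat_mul, mul_assoc, ← Real.exp_add]
      congr 1
      ring
    rw [tsum_congr h1, tsum_mul_left,
      tsum_geometric_of_lt_one (Real.exp_nonneg _) (Real.exp_lt_one_iff.mpr (by linarith)),
      div_eq_mul_inv]
  rw [hGsum] at key
  refine key.congr' ?_
  filter_upwards [eventually_ge_atTop (2 + 2 * (|a| + 1) * (r + 1))] with s hs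
  exact aux_rewrite hr s hs
end
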